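/- arXiv:2109.01930 — 3 statements merged into one kernel-verified Lean document; each statement's English description precedes it below -/
import Mathlib

section
/- Two orientations O⃗₁ and O⃗₂ of a connected finite graph G are in the same cycle reversal class if and only if O⃗₁ − O⃗₂ ∈ ker(D) ∩ Z^E, and this holds if and only if O⃗₁ can be obtained from O⃗₂ by reversing a collection of pairwise edge-disjoint directed cycles. -/
open Function

namespace GB

structure Graph where
  V : Type
  E : Type
  [fV : Fintype V]
  [fE : Fintype E]
  [dV : DecidableEq V]
  [dE : DecidableEq E]
  tail : E → V
  head : E → V

attribute [instance] Graph.fV Graph.fE Graph.dV Graph.dE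

variable (G : Graph)

/-- Incidence matrix with respect to the reference orientation. -/
def incMat : Matrix G.V G.E ℝ := fun v e =>
  (if G.head e = v then 1 else 0) - (if G.tail e = v then 1 else 0)

/-- The incidence linear map. -/
noncomputable def DMap : (G.E → ℝ) →ₗ[ℝ] (G.V → ℝ) := (incMat G).mulVecLin

/-- Cycle space: kernel of the incidence matrix (equal to ker of D with a row removed). -/
noncomputable def cycleSpace : Submodule ℝ (G.E → ℝ) := LinearMap.ker (DMap G)

/-- Cocycle space: row space of the incidence matrix (= im(D^T) for connected G). -/
noncomputable def cocycleSpace : Submodule ℝ (G.E → ℝ) :=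
  LinearMap.range ((incMat G).transpose.mulVecLin)

def Connected : Prop :=
  ∀ f : G.V → ℝ, (∀ e, f (G.head e) = f (G.tail e)) → ∀ v w, f v = f w

/-- a {0,±1}-vector -/
def IsZPM (x : G.E → ℝ) : Prop := ∀ e, x e = 0 ∨ x e = 1 ∨ x e = -1

/-- A directed cycle, identified with a support-minimal nonzero {0,±1}-vector of the
cycle space (a signed circuit of the graphic matroid). -/
def IsDirCycle (x : G.E → ℝ) : Prop :=
  x ∈ cycleSpace G ∧ x ≠ 0 ∧ IsZPM G x ∧
    ∀ y ∈ cycleSpace G, y ≠ 0 → support y ⊆ support x → support y = support x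

/-- A directed cocycle (signed cocircuit). -/
def IsDirCocycle (x : G.E → ℝ) : Prop :=
  x ∈ cocycleSpace G ∧ x ≠ 0 ∧ IsZPM G x ∧
    ∀ y ∈ cocycleSpace G, y ≠ 0 → support y ⊆ support x → support y = support x

def IsCycle (C : Set G.E) : Prop := ∃ x, IsDirCycle G x ∧ support x = C
def IsCocycle (C : Set G.E) : Prop := ∃ x, IsDirCocycle G x ∧ support x = C

/-- Orientations are identified with {0,1}-vectors, (1,…,1) being the reference orientation. -/
def IsOrientation (O : G.E → ℝ) : Prop := ∀ e, O e = 0 ∨ O e = 1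

/-- the ±1 direction of edge e in orientation O -/
def dir (O : G.E → ℝ) (e : G.E) : ℝ := 2 * O e - 1

/-- the signed vector x (e.g. a directed cycle or partial orientation) is contained in O -/
def InOrient (x O : G.E → ℝ) : Prop := ∀ e, x e = 0 ∨ x e = dir G O e

def IsIntVec (x : G.E → ℝ) : Prop := ∀ e, ∃ n : ℤ, x e = (n : ℝ)

/-- x is a sum of pairwise edge-disjoint directed cycles -/
def SumDisjDirCycles (x : G.E → ℝ) : Prop :=
  ∃ (n : ℕ) (c : Fin n → (G.E → ℝ)), (∀ i, IsDirCycle G (c i)) ∧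
    (∀ i j, i ≠ j → Disjoint (support (c i)) (support (c j))) ∧ x = ∑ i, c i

/-- x is a sum of pairwise edge-disjoint directed cocycles -/
def SumDisjDirCocycles (x : G.E → ℝ) : Prop :=
  ∃ (n : ℕ) (c : Fin n → (G.E → ℝ)), (∀ i, IsDirCocycle G (c i)) ∧
    (∀ i j, i ≠ j → Disjoint (support (c i)) (support (c j))) ∧ x = ∑ i, c i

/-- A cycle signature: a choice of direction for each cycle. -/
structure CycSig (G : Graph) where
  s : Set G.E → (G.E → ℝ)
  mem : ∀ C, IsCycle G C → IsDirCycle G (s C) ∧ support (s C) = C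

/-- A cocycle signature. -/
structure CocycSig (G : Graph) where
  s : Set G.E → (G.E → ℝ)
  mem : ∀ C, IsCocycle G C → IsDirCocycle G (s C) ∧ support (s C) = C

open Classical in
/-- σ is acyclic: no nontrivial nonnegative combination of the σ(C) vanishes. -/
noncomputable def AcyclicSig (σ : CycSig G) : Prop :=
  ∀ a : Set G.E → ℝ, (∀ C, 0 ≤ a C) →
    ∑ C ∈ Finset.univ.filter (fun C => IsCycle G C), a C • σ.s C = 0 →
    ∀ C, IsCycle G C → a C = 0

open Classical in
noncomputable def AcyclicCosig (σ : CocycSig G) : Prop :=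
  ∀ a : Set G.E → ℝ, (∀ C, 0 ≤ a C) →
    ∑ C ∈ Finset.univ.filter (fun C => IsCocycle G C), a C • σ.s C = 0 →
    ∀ C, IsCocycle G C → a C = 0

/-- O is σ-compatible: every directed cycle in O is the chosen one. -/
def SigCompatible (σ : CycSig G) (O : G.E → ℝ) : Prop :=
  ∀ x, IsDirCycle G x → InOrient G x O → x = σ.s (support x)

def CosigCompatible (σ : CocycSig G) (O : G.E → ℝ) : Prop :=
  ∀ x, IsDirCocycle G x → InOrient G x O → x = σ.s (support x)

def Compatible (σc : CycSig G) (σs : CocycSig G) (O : G.E → ℝ) : Prop :=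
  SigCompatible G σc O ∧ CosigCompatible G σs O

/-- one step of cycle reversal -/
def CycRev (O O' : G.E → ℝ) : Prop :=
  ∃ x, IsDirCycle G x ∧ InOrient G x O ∧ O' = O - x

/-- cycle reversal equivalence -/
def SameCycClass : (G.E → ℝ) → (G.E → ℝ) → Prop := Relation.EqvGen (CycRev G)

/-- one step of cycle or cocycle reversal -/
def CCRev (O O' : G.E → ℝ) : Prop :=
  ∃ x, (IsDirCycle G x ∨ IsDirCocycle G x) ∧ InOrient G x O ∧ O' = O - x

/-- cycle-cocycle reversal equivalence -/
def SameCCClass : (G.E → ℝ) → (G.E → ℝ) → Prop := Relation.EqvGen (CCRev G)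

/-- x is the directed fundamental cycle of e ∉ T, directed along the reference arc of e -/
def FundCycle (T : Finset G.E) (e : G.E) (x : G.E → ℝ) : Prop :=
  IsDirCycle G x ∧ x e = 1 ∧ support x ⊆ insert e (↑T : Set G.E)

/-- x is the directed fundamental cocycle of e ∈ T -/
def FundCocycle (T : Finset G.E) (e : G.E) (x : G.E → ℝ) : Prop :=
  IsDirCocycle G x ∧ x e = 1 ∧ support x ⊆ insert e ((↑T : Set G.E)ᶜ)

/-- T is a spanning tree: it contains no cycle and its complement contains no cocycle. -/
def IsSpanningTree (T : Finset G.E) : Prop :=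
  (∀ x, IsDirCycle G x → ¬ support x ⊆ (↑T : Set G.E)) ∧
  (∀ x, IsDirCocycle G x → ¬ support x ⊆ ((↑T : Set G.E)ᶜ))

/-- O = g_{σ,σ*}(T): each e ∉ T is oriented along σ(C(T,e)), each e ∈ T along σ*(C*(T,e)). -/
def GOrient (σc : CycSig G) (σs : CocycSig G) (T : Finset G.E) (O : G.E → ℝ) : Prop :=
  IsOrientation G O ∧
  (∀ e ∉ T, ∀ x, FundCycle G T e x → dir G O e = σc.s (support x) e) ∧
  (∀ e ∈ T, ∀ x, FundCocycle G T e x → dir G O e = σs.s (support x) e)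

/-- φ_{σ,σ*}(O) = S : O is obtained from the compatible orientation O^cp = g(T) by reversing
disjoint directed cycles c i and cocycles d j, and S = T ∪ (⊎ C_i) \ (⊎ C*_j). -/
def PhiRel (σc : CycSig G) (σs : CocycSig G) (O : G.E → ℝ) (S : Set G.E) : Prop :=
  ∃ (T : Finset G.E) (Ocp : G.E → ℝ) (n m : ℕ)
    (c : Fin n → (G.E → ℝ)) (d : Fin m → (G.E → ℝ)),
    IsSpanningTree G T ∧ Compatible G σc σs Ocp ∧ GOrient G σc σs T Ocp ∧
    (∀ i, IsDirCycle G (c i) ∧ InOrient G (c i) Ocp) ∧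
    (∀ j, IsDirCocycle G (d j) ∧ InOrient G (d j) Ocp) ∧
    (∀ i j, i ≠ j → Disjoint (support (c i)) (support (c j))) ∧
    (∀ i j, i ≠ j → Disjoint (support (d i)) (support (d j))) ∧
    (∀ i j, Disjoint (support (c i)) (support (d j))) ∧
    O = Ocp - (∑ i, c i) - (∑ j, d j) ∧
    S = ((↑T : Set G.E) ∪ (⋃ i, support (c i))) \ (⋃ j, support (d j))


/-- the cube of continuous orientations -/
def cube : Set (G.E → ℝ) := {x | ∀ e, 0 ≤ x e ∧ x e ≤ 1}

/-- x is a σ-compatible continuous orientation -/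
def ContSigCompat (σ : CycSig G) (x : G.E → ℝ) : Prop :=
  x ∈ cube G ∧ ∀ ε : ℝ, 0 < ε → ∀ C, IsCycle G C → x + ε • σ.s C ∉ cube G

/-- S̃_σ = S_σ + (im(D^T) ∩ ℤ^E) -/
def Stilde (σ : CycSig G) : Set (G.E → ℝ) :=
  {x | ∃ s, ContSigCompat G σ s ∧ ∃ v, v ∈ cocycleSpace G ∧ IsIntVec G v ∧ x = s + v}

end GB
namespace StmtAux
open GB

variable (G : GB.Graph)

/-- start vertex of edge `a` in the orientation given by the sign of `y` -/
noncomputable def ta (y : G.E → ℝ) (a : G.E) : G.V := if y a = 1 then G.tail a else G.head a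
/-- end vertex -/
noncomputable def he (y : G.E → ℝ) (a : G.E) : G.V := if y a = 1 then G.head a else G.tail a

lemma mem_cycleSpace_iff (y : G.E → ℝ) :
    y ∈ cycleSpace G ↔ ∀ v, ∑ a, incMat G v a * y a = 0 := by
  constructor
  · intro h v
    have := congrFun (LinearMap.mem_ker.mp h) v
    simpa [DMap, Matrix.mulVecLin_apply, Matrix.mulVec, dotProduct] using this
  · intro h
    refine LinearMap.mem_ker.mpr (funext fun v => ?_)
    simpa [DMap, Matrix.mulVecLin_apply, Matrix.mulVec, dotProduct] using h v

lemma col (y : G.E → ℝ) (a : G.E) (ha : y a = 1 ∨ y a = -1) (v : G.V) :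
    incMat G v a * y a
      = (if he G y a = v then 1 else 0) - (if ta G y a = v then 1 else 0) := by
  rcases ha with h | h
  · simp [incMat, ta, he, h]
  · rw [h]; norm_num [incMat, ta, he, h]

lemma col2 (y : G.E → ℝ) (a : G.E) (ha : y a = 1 ∨ y a = -1) (v : G.V) :
    incMat G v a
      = y a * ((if he G y a = v then 1 else 0) - (if ta G y a = v then 1 else 0)) := by
  rw [← col G y a ha v]
  rcases ha with h | h <;> rw [h] <;> ring

lemma exists_next (y : G.E → ℝ) (hker : y ∈ cycleSpace G) (hz : IsZPM G y)
    (a : G.E) (ha : y a ≠ 0) : ∃ b, y b ≠ 0 ∧ ta G y b = he G y a := by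
  by_contra hno
  push_neg at hno
  have hsum := (mem_cycleSpace_iff G y).mp hker (he G y a)
  have hterm : ∀ b ∈ Finset.univ, (0:ℝ) ≤ incMat G (he G y a) b * y b := by
    intro b _
    rcases hz b with h0 | h1 | h1
    · simp [h0]
    · rw [col G y b (Or.inl h1) (he G y a)]
      have hta : ta G y b ≠ he G y a := hno b (by rw [h1]; norm_num)
      rw [if_neg hta]
      split <;> norm_num
    · rw [col G y b (Or.inr h1) (he G y a)]
      have hta : ta G y b ≠ he G y a := hno b (by rw [h1]; norm_num)
      rw [if_neg hta]
      split <;> norm_num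
  have hzero := (Finset.sum_eq_zero_iff_of_nonneg hterm).mp hsum a (Finset.mem_univ a)
  have h1 : y a = 1 ∨ y a = -1 := (hz a).resolve_left ha
  rw [col G y a h1 (he G y a)] at hzero
  have hta : ta G y a ≠ he G y a := hno a ha
  rw [if_pos rfl, if_neg hta] at hzero
  norm_num at hzero

noncomputable def step (y : G.E → ℝ) (hker : y ∈ cycleSpace G) (hz : IsZPM G y) :
    {a : G.E // y a ≠ 0} → {a : G.E // y a ≠ 0} :=
  fun a => ⟨(exists_next G y hker hz a.1 a.2).choose,
    (exists_next G y hker hz a.1 a.2).choose_spec.1⟩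

lemma step_spec (y : G.E → ℝ) (hker : y ∈ cycleSpace G) (hz : IsZPM G y)
    (a : {a : G.E // y a ≠ 0}) :
    ta G y (step G y hker hz a).1 = he G y a.1 :=
  (exists_next G y hker hz a.1 a.2).choose_spec.2

open Fin.NatCast in
/-- from cyclic data, build a directed cycle -/
lemma cycle_of_data (y : G.E → ℝ) (hz : IsZPM G y) (k : ℕ) (E' : Fin (k+1) → G.E)
    (hne : ∀ t, y (E' t) ≠ 0)
    (harc : ∀ t, he G y (E' t) = ta G y (E' (t + 1)))
    (vinj : Function.Injective fun t => ta G y (E' t)) :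
    ∃ c, IsDirCycle G c ∧ support c ⊆ support y ∧ ∀ a, c a ≠ 0 → c a = y a := by
  have Einj : Function.Injective E' := fun s t h => vinj (by simp only [h])
  set c : G.E → ℝ := fun a => if a ∈ Finset.univ.image E' then y a else 0 with hc
  have hmem : ∀ t, c (E' t) = y (E' t) := by
    intro t
    simp only [hc]
    rw [if_pos (Finset.mem_image_of_mem E' (Finset.mem_univ t))]
  have hnotmem : ∀ a, a ∉ Finset.univ.image E' → c a = 0 := by
    intro a ha; simp only [hc]; rw [if_neg ha]
  have hsupp : ∀ a, c a ≠ 0 → ∃ t, E' t = a := by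
    intro a ha
    by_contra hcon
    push_neg at hcon
    apply ha (hnotmem a (by simp [hcon]))
  have hzpm1 : ∀ t, y (E' t) = 1 ∨ y (E' t) = -1 := fun t => (hz (E' t)).resolve_left (hne t)
  -- c is in the cycle space
  have hkerc : c ∈ cycleSpace G := by
    rw [mem_cycleSpace_iff]
    intro v
    have e1 : ∀ a, incMat G v a * c a
        = if a ∈ Finset.univ.image E' then incMat G v a * y a else 0 := by
      intro a
      by_cases h : a ∈ Finset.univ.image E'
      · rw [if_pos h]
        obtain ⟨t, _, rfl⟩ := Finset.mem_image.mp h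
        rw [hmem]
      · rw [if_neg h, hnotmem a h, mul_zero]
    calc ∑ a, incMat G v a * c a
        = ∑ a ∈ Finset.univ.image E', incMat G v a * y a := by
          rw [Finset.sum_congr rfl (fun a _ => e1 a), Finset.sum_ite_mem,
            Finset.univ_inter]
      _ = ∑ t, incMat G v (E' t) * y (E' t) :=
          Finset.sum_image (fun s _ t _ h => Einj h)
      _ = ∑ t, ((if he G y (E' t) = v then (1:ℝ) else 0)
            - (if ta G y (E' t) = v then 1 else 0)) :=
          Finset.sum_congr rfl (fun t _ => col G y (E' t) (hzpm1 t) v)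
      _ = (∑ t, (if ta G y (E' (t+1)) = v then (1:ℝ) else 0))
            - ∑ t, (if ta G y (E' t) = v then (1:ℝ) else 0) := by
          rw [← Finset.sum_sub_distrib]
          exact Finset.sum_congr rfl (fun t _ => by rw [harc t])
      _ = 0 := by
          rw [Fintype.sum_bijective (· + (1 : Fin (k+1)))
            (Equiv.addRight (1 : Fin (k+1))).bijective _
            (fun t => if ta G y (E' t) = v then (1:ℝ) else 0) (fun t => rfl)]
          ring
  have hcne : c ≠ 0 := by
    intro h
    apply hne 0
    have := congrFun h (E' 0)
    rwa [hmem 0] at this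
  have hzpmc : IsZPM G c := by
    intro a
    by_cases h : a ∈ Finset.univ.image E'
    · obtain ⟨t, _, rfl⟩ := Finset.mem_image.mp h
      rw [hmem]; exact hz (E' t)
    · left; exact hnotmem a h
  -- minimality
  have hmin : ∀ w ∈ cycleSpace G, w ≠ 0 → support w ⊆ support c → support w = support c := by
    intro w hw hwne hsub
    have hwz : ∀ a, (∀ t, E' t ≠ a) → w a = 0 := by
      intro a ha
      by_contra hwa
      have : a ∈ support c := hsub hwa
      obtain ⟨t, ht⟩ := hsupp a this
      exact ha t ht
    have hall : ∀ t, w (E' t) ≠ 0 := by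
      obtain ⟨a, hwa⟩ := Function.ne_iff.mp hwne
      have hwa : w a ≠ 0 := hwa
      obtain ⟨t₀, ht₀⟩ := hsupp a (hsub hwa)
      rcases Nat.eq_zero_or_pos k with hk | hk
      · subst hk
        intro t
        have : t = t₀ := Fin.ext (by omega)
        rw [this, ht₀]; exact hwa
      · -- conservation around the cycle
        have hone : (1 : Fin (k+1)) ≠ 0 := by
          intro h
          have := congrArg Fin.val h
          simp [Fin.val_one, Nat.mod_eq_of_lt (by omega : 1 < k + 1)] at this
        have hcons : ∀ i : Fin (k+1),
            y (E' i) * w (E' i) = y (E' (i+1)) * w (E' (i+1)) := by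
          intro i
          have hv := (mem_cycleSpace_iff G w).mp hw (ta G y (E' (i+1)))
          set v := ta G y (E' (i+1)) with hvdef
          have e1 : ∀ a, incMat G v a * w a
              = if a ∈ Finset.univ.image E' then incMat G v a * w a else 0 := by
            intro a
            by_cases h : a ∈ Finset.univ.image E'
            · rw [if_pos h]
            · rw [if_neg h, hwz a, mul_zero]
              intro t ht; exact h (ht ▸ Finset.mem_image_of_mem E' (Finset.mem_univ t))
          have e2 : ∑ a, incMat G v a * w a = ∑ t, incMat G v (E' t) * w (E' t) := by
            rw [Finset.sum_congr rfl (fun a _ => e1 a), Finset.sum_ite_mem,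
              Finset.univ_inter]
            exact Finset.sum_image (fun s _ t _ h => Einj h)
          have e3 : ∀ t : Fin (k+1), incMat G v (E' t) * w (E' t)
              = (if t = i then y (E' t) * w (E' t) else 0)
                - (if t = i + 1 then y (E' t) * w (E' t) else 0) := by
            intro t
            rw [col2 G y (E' t) (hzpm1 t) v]
            have hhe : (he G y (E' t) = v) ↔ (t = i) := by
              rw [harc t, hvdef]
              constructor
              · intro h; have := vinj h; exact add_right_cancel this
              · intro h; rw [h]
            have hta : (ta G y (E' t) = v) ↔ (t = i + 1) := by
              rw [hvdef]
              constructor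
              · intro h; exact vinj h
              · intro h; rw [h]
            by_cases h1 : t = i
            · rw [if_pos h1, if_pos (hhe.mpr h1)]
              have h2 : ¬ (t = i + 1) := by
                intro h2; rw [h1] at h2
                exact hone (by
                  have := add_left_cancel (a := i) (by rw [← h2, add_zero] : i + 0 = i + 1)
                  exact this.symm)
              rw [if_neg (fun hh => h2 (hta.mp hh)), if_neg h2]
              ring
            · rw [if_neg h1, if_neg (fun hh => h1 (hhe.mp hh))]
              by_cases h2 : t = i + 1
              · rw [if_pos (hta.mpr h2), if_pos h2]; ring
              · rw [if_neg (fun hh => h2 (hta.mp hh)), if_neg h2]; ring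
          rw [e2, Finset.sum_congr rfl (fun t _ => e3 t), Finset.sum_sub_distrib,
            Finset.sum_ite_eq' Finset.univ i (fun t => y (E' t) * w (E' t)),
            Finset.sum_ite_eq' Finset.univ (i+1) (fun t => y (E' t) * w (E' t))] at hv
          simp only [Finset.mem_univ, if_true] at hv
          linarith
        have hconst : ∀ i : Fin (k+1), y (E' i) * w (E' i) = y (E' 0) * w (E' 0) := by
          intro i
          have key : ∀ m : ℕ, y (E' (m : Fin (k+1))) * w (E' (m : Fin (k+1)))
              = y (E' 0) * w (E' 0) := by
            intro m
            induction m with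
            | zero => simp
            | succ m ih => rw [Nat.cast_succ, ← hcons]; exact ih
          have := key i.val
          rwa [Fin.cast_val_eq_self] at this
        have h0 : y (E' 0) * w (E' 0) ≠ 0 := by
          rw [← hconst t₀, ht₀]
          exact mul_ne_zero (ht₀ ▸ hne t₀) hwa
        intro t
        have := hconst t
        intro hwt
        rw [hwt, mul_zero] at this
        exact h0 this.symm
    apply Set.Subset.antisymm hsub
    intro a hac
    obtain ⟨t, ht⟩ := hsupp a hac
    rw [← ht]
    exact hall t
  refine ⟨c, ⟨hkerc, hcne, hzpmc, hmin⟩, ?_, ?_⟩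
  · intro a hac
    obtain ⟨t, ht⟩ := hsupp a hac
    rw [← ht]; exact hne t
  · intro a hac
    obtain ⟨t, ht⟩ := hsupp a hac
    rw [← ht]; exact hmem t

lemma exists_conformal_cycle (y : G.E → ℝ) (hker : y ∈ cycleSpace G) (hz : IsZPM G y)
    (hy : y ≠ 0) :
    ∃ c, IsDirCycle G c ∧ support c ⊆ support y ∧ ∀ a, c a ≠ 0 → c a = y a := by
  obtain ⟨a₀, h₀⟩ := Function.ne_iff.mp hy
  have h₀ : y a₀ ≠ 0 := h₀
  -- infinite walk
  set sq : ℕ → {a : G.E // y a ≠ 0} := fun n => (step G y hker hz)^[n] ⟨a₀, h₀⟩ with hsq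
  have hstep : ∀ n, ta G y (sq (n+1)).1 = he G y (sq n).1 := by
    intro n
    rw [hsq]
    simp only [Function.iterate_succ_apply']
    exact step_spec G y hker hz _
  -- vertex sequence repeats
  set Vt : ℕ → G.V := fun n => ta G y (sq n).1 with hVt
  have hrep : ∃ j, ∃ i < j, Vt i = Vt j := by
    obtain ⟨i, j, hij, heq⟩ := Fintype.exists_ne_map_eq_of_card_lt
      (fun m : Fin (Fintype.card G.V + 1) => Vt m.1) (by simp)
    rcases lt_or_gt_of_ne (fun h : i.1 = j.1 => hij (Fin.ext h)) with h | h
    · exact ⟨j.1, i.1, h, heq⟩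
    · exact ⟨i.1, j.1, h, heq.symm⟩
  classical
  let P : ℕ → Prop := fun j => ∃ i < j, Vt i = Vt j
  have hP : ∃ j, P j := hrep
  let j₀ := Nat.find hP
  obtain ⟨i₀, hi₀lt, hi₀eq⟩ : P j₀ := Nat.find_spec hP
  have hmin : ∀ m < j₀, ¬ P m := fun m hm => Nat.find_min hP hm
  set k : ℕ := j₀ - i₀ - 1 with hk
  have hj₀ : j₀ = i₀ + k + 1 := by omega
  set E' : Fin (k+1) → G.E := fun t => (sq (i₀ + t.1)).1 with hE'
  have hne : ∀ t, y (E' t) ≠ 0 := fun t => (sq (i₀ + t.1)).2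
  have hvinj : Function.Injective fun t : Fin (k+1) => ta G y (E' t) := by
    intro s t hst
    by_contra hne'
    rcases lt_or_gt_of_ne (fun h : s.1 = t.1 => hne' (Fin.ext h)) with h | h
    · exact hmin (i₀ + t.1) (by omega) ⟨i₀ + s.1, by omega, hst⟩
    · exact hmin (i₀ + s.1) (by omega) ⟨i₀ + t.1, by omega, hst.symm⟩
  have harc : ∀ t, he G y (E' t) = ta G y (E' (t + 1)) := by
    intro t
    by_cases ht : t = Fin.last k
    · have h1 : t + 1 = 0 := by rw [ht]; simp
      have h2 : t.1 = k := by rw [ht]; rfl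
      rw [h1]
      have : he G y (E' t) = Vt j₀ := by
        rw [hE']
        show he G y (sq (i₀ + t.1)).1 = Vt j₀
        rw [h2, ← hstep (i₀ + k), hVt, hj₀]
      rw [this, ← hi₀eq]
      show Vt i₀ = ta G y (sq (i₀ + (0:Fin (k+1)).1)).1
      simp [hVt]
    · have h1 : (t + 1 : Fin (k+1)).1 = t.1 + 1 := by
        rw [Fin.val_add_one]
        simp [ht]
      show he G y (sq (i₀ + t.1)).1 = ta G y (sq (i₀ + (t+1).1)).1
      rw [h1, ← Nat.add_assoc, hstep (i₀ + t.1)]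
  exact cycle_of_data G y hz k E' hne harc hvinj

open Classical in
lemma decomp : ∀ (N : ℕ) (y : G.E → ℝ),
    (Finset.univ.filter (fun a => y a ≠ 0)).card ≤ N →
    y ∈ cycleSpace G → IsZPM G y →
    ∃ (n : ℕ) (c : Fin n → (G.E → ℝ)), (∀ i, IsDirCycle G (c i)) ∧
      (∀ i a, c i a ≠ 0 → c i a = y a) ∧
      (∀ i j, i ≠ j → Disjoint (support (c i)) (support (c j))) ∧ y = ∑ i, c i := by
  intro N
  induction N with
  | zero =>
    intro y hcard hker hz
    have hy : y = 0 := by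
      funext a
      simp only [Pi.zero_apply]
      by_contra ha
      have : a ∈ Finset.univ.filter (fun a => y a ≠ 0) := by
        simp [ha]
      have := Finset.card_pos.mpr ⟨a, this⟩
      omega
    exact ⟨0, fun i => 0, fun i => i.elim0, fun i => i.elim0,
      fun i => i.elim0, by simp [hy]⟩
  | succ N ih =>
    intro y hcard hker hz
    by_cases hy : y = 0
    · exact ⟨0, fun i => 0, fun i => i.elim0, fun i => i.elim0,
        fun i => i.elim0, by simp [hy]⟩
    · obtain ⟨c, hcyc, hsub, hconf⟩ := exists_conformal_cycle G y hker hz hy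
      set y' : G.E → ℝ := y - c with hy'
      have key1 : ∀ a, c a ≠ 0 → y' a = 0 := by
        intro a ha
        have := hconf a ha
        simp [hy', this]
      have key2 : ∀ a, c a = 0 → y' a = y a := by
        intro a ha; simp [hy', ha]
      have hker' : y' ∈ cycleSpace G := sub_mem hker hcyc.1
      have hz' : IsZPM G y' := by
        intro a
        by_cases ha : c a = 0
        · rw [key2 a ha]; exact hz a
        · left; exact key1 a ha
      have hcard' : (Finset.univ.filter (fun a => y' a ≠ 0)).card ≤ N := by
        have hss : Finset.univ.filter (fun a => y' a ≠ 0)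
            ⊂ Finset.univ.filter (fun a => y a ≠ 0) := by
          constructor
          · intro a ha
            simp only [Finset.mem_filter, Finset.mem_univ, true_and] at ha ⊢
            by_cases hca : c a = 0
            · rw [key2 a hca] at ha; exact ha
            · exact absurd (key1 a hca) ha
          · intro hcon
            obtain ⟨a, ha⟩ := Function.ne_iff.mp hcyc.2.1
            have ha : c a ≠ 0 := ha
            have h1 : a ∈ Finset.univ.filter (fun a => y a ≠ 0) := by
              simp only [Finset.mem_filter, Finset.mem_univ, true_and]
              rw [← hconf a ha]; exact ha
            have h2 := hcon h1
            simp only [Finset.mem_filter, Finset.mem_univ, true_and] at h2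
            exact h2 (key1 a ha)
        have := Finset.card_lt_card hss
        omega
      obtain ⟨n, c', h1, h2, h3, h4⟩ := ih y' hcard' hker' hz'
      have hdisj0 : ∀ j, Disjoint (support c) (support (c' j)) := by
        intro j
        rw [Set.disjoint_left]
        intro a hac hac'
        have hy'a : y' a = 0 := key1 a hac
        have : c' j a = y' a := h2 j a hac'
        exact hac' (this.trans hy'a)
      refine ⟨n + 1, Fin.cons c c', ?_, ?_, ?_, ?_⟩
      · intro i
        refine Fin.cases ?_ ?_ i
        · exact hcyc
        · intro j; exact h1 j
      · intro i
        refine Fin.cases ?_ ?_ i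
        · exact hconf
        · intro j a ha
          simp only [Fin.cons_succ] at ha ⊢
          have e1 : c' j a = y' a := h2 j a ha
          have hca : c a = 0 := by
            by_contra hca
            exact ha (e1.trans (key1 a hca))
          rw [e1, key2 a hca]
      · intro i j hij
        rcases Fin.eq_zero_or_eq_succ i with rfl | ⟨i', rfl⟩ <;>
          rcases Fin.eq_zero_or_eq_succ j with rfl | ⟨j', rfl⟩
        · exact absurd rfl hij
        · simp only [Fin.cons_zero, Fin.cons_succ]
          exact hdisj0 j'
        · simp only [Fin.cons_zero, Fin.cons_succ]
          exact (hdisj0 i').symm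
        · simp only [Fin.cons_succ]
          exact h3 i' j' (fun h => hij (by rw [h]))
      · rw [Fin.sum_cons, ← h4, hy']
        abel

lemma revChain : ∀ (n : ℕ) (c : Fin n → (G.E → ℝ)) (O : G.E → ℝ),
    (∀ i, IsDirCycle G (c i) ∧ InOrient G (c i) O) →
    (∀ i j, i ≠ j → Disjoint (support (c i)) (support (c j))) →
    SameCycClass G O (O - ∑ i, c i) := by
  intro n
  induction n with
  | zero =>
    intro c O _ _
    have : (∑ i, c i) = 0 := by simp
    rw [this, sub_zero]
    exact Relation.EqvGen.refl O
  | succ n ih =>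
    intro c O h hdisj
    have hstep : CycRev G O (O - c 0) := ⟨c 0, (h 0).1, (h 0).2, rfl⟩
    have htail : SameCycClass G (O - c 0) ((O - c 0) - ∑ i : Fin n, c i.succ) := by
      apply ih (fun i => c i.succ) (O - c 0)
      · intro i
        refine ⟨(h i.succ).1, ?_⟩
        intro a
        by_cases hca : c i.succ a = 0
        · left; exact hca
        · right
          have hc0 : c 0 a = 0 := by
            have := hdisj 0 i.succ (Fin.succ_ne_zero i).symm
            rw [Set.disjoint_left] at this
            by_contra hc0
            exact this hc0 hca
          rcases (h i.succ).2 a with h' | h'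
          · exact absurd h' hca
          · rw [h']
            simp [dir, Pi.sub_apply, hc0]
      · intro i j hij
        exact hdisj i.succ j.succ (fun h => hij (Fin.succ_injective n h))
    have heq : (O - c 0) - ∑ i : Fin n, c i.succ = O - ∑ i, c i := by
      rw [Fin.sum_univ_succ, sub_sub]
    rw [← heq]
    exact Relation.EqvGen.trans _ _ _ (Relation.EqvGen.rel _ _ hstep) htail

lemma forward (O O' : G.E → ℝ) (h : SameCycClass G O O') :
    O - O' ∈ cycleSpace G ∧ IsIntVec G (O - O') := by
  have h' : Relation.EqvGen (CycRev G) O O' := h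
  clear h
  induction h' with
  | rel a b hab =>
    obtain ⟨x, hx, _, rfl⟩ := hab
    constructor
    · have : a - (a - x) = x := by abel
      rw [this]; exact hx.1
    · intro e
      have he : (a - (a - x)) e = x e := by simp
      rcases hx.2.2.1 e with h | h | h
      · exact ⟨0, by rw [he, h]; simp⟩
      · exact ⟨1, by rw [he, h]; simp⟩
      · exact ⟨-1, by rw [he, h]; simp⟩
  | refl a =>
    constructor
    · simp
    · intro e; exact ⟨0, by simp⟩
  | symm a b _ ihab =>
    constructor
    · have : b - a = -(a - b) := by abel
      rw [this]; exact neg_mem ihab.1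
    · intro e
      obtain ⟨m, hm⟩ := ihab.2 e
      refine ⟨-m, ?_⟩
      have : (b - a) e = -((a - b) e) := by simp
      rw [this, hm]; push_cast; ring
  | trans a b c _ _ ihab ihbc =>
    constructor
    · have : a - c = (a - b) + (b - c) := by abel
      rw [this]; exact add_mem ihab.1 ihbc.1
    · intro e
      obtain ⟨m, hm⟩ := ihab.2 e
      obtain ⟨m', hm'⟩ := ihbc.2 e
      refine ⟨m + m', ?_⟩
      have : (a - c) e = (a - b) e + (b - c) e := by simp
      rw [this, hm, hm']; push_cast; ring

end StmtAux

open GB in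
theorem stmt_3 (G : GB.Graph) (hconn : GB.Connected G)
    (O₁ O₂ : G.E → ℝ) (h₁ : GB.IsOrientation G O₁) (h₂ : GB.IsOrientation G O₂) :
    (GB.SameCycClass G O₁ O₂ ↔ (O₁ - O₂ ∈ GB.cycleSpace G ∧ GB.IsIntVec G (O₁ - O₂))) ∧
    (GB.SameCycClass G O₁ O₂ ↔
      ∃ (n : ℕ) (c : Fin n → (G.E → ℝ)),
        (∀ i, GB.IsDirCycle G (c i) ∧ GB.InOrient G (c i) O₂) ∧
        (∀ i j, i ≠ j → Disjoint (Function.support (c i)) (Function.support (c j))) ∧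
        O₁ = O₂ - ∑ i, c i) := by
  classical
  have hAB : SameCycClass G O₁ O₂ → (O₁ - O₂ ∈ cycleSpace G ∧ IsIntVec G (O₁ - O₂)) :=
    StmtAux.forward G O₁ O₂
  have hBC : (O₁ - O₂ ∈ cycleSpace G ∧ IsIntVec G (O₁ - O₂)) →
      ∃ (n : ℕ) (c : Fin n → (G.E → ℝ)),
        (∀ i, IsDirCycle G (c i) ∧ InOrient G (c i) O₂) ∧
        (∀ i j, i ≠ j → Disjoint (Function.support (c i)) (Function.support (c j))) ∧
        O₁ = O₂ - ∑ i, c i := by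
    rintro ⟨hker, -⟩
    set y : G.E → ℝ := O₂ - O₁ with hy
    have hkery : y ∈ cycleSpace G := by
      have h' : y = -(O₁ - O₂) := by rw [hy]; abel
      rw [h']; exact neg_mem hker
    have hzy : IsZPM G y := by
      intro a
      rcases h₂ a with h2 | h2 <;> rcases h₁ a with h1 | h1 <;>
        norm_num [hy, Pi.sub_apply, h1, h2]
    obtain ⟨n, c, hc1, hc2, hc3, hc4⟩ := StmtAux.decomp G _ y le_rfl hkery hzy
    refine ⟨n, c, ?_, hc3, ?_⟩
    · intro i
      refine ⟨hc1 i, ?_⟩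
      intro a
      by_cases hca : c i a = 0
      · left; exact hca
      · right
        have hya : c i a = y a := hc2 i a hca
        have hyne : y a ≠ 0 := hya ▸ hca
        rcases h₂ a with h2 | h2 <;> rcases h₁ a with h1 | h1
        · exact absurd (by norm_num [hy, Pi.sub_apply, h1, h2]) hyne
        · rw [hya]; norm_num [hy, dir, Pi.sub_apply, h1, h2]
        · rw [hya]; norm_num [hy, dir, Pi.sub_apply, h1, h2]
        · exact absurd (by norm_num [hy, Pi.sub_apply, h1, h2]) hyne
    · rw [← hc4, hy]; abel
  have hCA : (∃ (n : ℕ) (c : Fin n → (G.E → ℝ)),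
        (∀ i, IsDirCycle G (c i) ∧ InOrient G (c i) O₂) ∧
        (∀ i j, i ≠ j → Disjoint (Function.support (c i)) (Function.support (c j))) ∧
        O₁ = O₂ - ∑ i, c i) → SameCycClass G O₁ O₂ := by
    rintro ⟨n, c, hc, hdisj, heq⟩
    have h' := StmtAux.revChain G n c O₂ hc hdisj
    rw [← heq] at h'
    exact Relation.EqvGen.symm _ _ h'
  exact ⟨⟨hAB, fun hb => hCA (hBC hb)⟩, ⟨fun ha => hBC (hAB ha), hCA⟩⟩
end

section
/- Let σ be an acyclic cycle signature of a connected finite graph G. Then every cycle reversal equivalence class of orientations of G contains exactly one σ-compatible orientation. -/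
open Function

namespace GB

variable (G : Graph)

lemma mem_cycleSpace_iff (x : G.E → ℝ) :
    x ∈ cycleSpace G ↔ ∀ v, ∑ e, incMat G v e * x e = 0 := by
  simp [cycleSpace, DMap, LinearMap.mem_ker, Matrix.mulVecLin_apply, funext_iff,
    Matrix.mulVec, dotProduct]

/-- entries of a difference of orientations -/
lemma orientation_diff_zpm {O O' : G.E → ℝ} (h : IsOrientation G O) (h' : IsOrientation G O') :
    IsZPM G (O - O') := by
  intro e
  rcases h e with h1 | h1 <;> rcases h' e with h2 | h2 <;>
    simp [Pi.sub_apply, h1, h2]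

/-- reversing a directed cycle inside an orientation yields an orientation -/
lemma orientation_sub {O x : G.E → ℝ} (hO : IsOrientation G O) (hin : InOrient G x O) :
    IsOrientation G (O - x) := by
  intro e
  rcases hin e with h | h
  · rcases hO e with h' | h' <;> simp [Pi.sub_apply, h, h']
  · rcases hO e with h' | h' <;>
      simp [Pi.sub_apply, h, dir, h'] <;> norm_num

lemma isDirCycle_neg {x : G.E → ℝ} (hx : IsDirCycle G x) : IsDirCycle G (-x) := by
  obtain ⟨hmem, hne, hzpm, hmin⟩ := hx
  refine ⟨neg_mem hmem, neg_ne_zero.2 hne, fun e => ?_, fun y hy hyne hsub => ?_⟩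
  · rcases hzpm e with h | h | h <;> simp [h]
  · have hs : Function.support (-x) = Function.support x := by
      ext e; simp [Function.mem_support]
    rw [hs] at hsub ⊢
    exact hmin y hy hyne hsub

/-- two directed cycles with nested supports are equal or opposite -/
lemma dirCycle_eq_or_neg {x y : G.E → ℝ} (hx : IsDirCycle G x) (hy : IsDirCycle G y)
    (hsub : Function.support y ⊆ Function.support x) : y = x ∨ y = -x := by
  obtain ⟨hxm, hxne, hxz, hxmin⟩ := hx
  obtain ⟨hym, hyne, hyz, hymin⟩ := hy
  have hsupp : Function.support y = Function.support x := hxmin y hym hyne hsub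
  obtain ⟨e, he⟩ : ∃ e, x e ≠ 0 := by
    by_contra h
    push_neg at h
    exact hxne (funext fun e => h e)
  have hye : y e ≠ 0 := by
    have : e ∈ Function.support y := hsupp ▸ Function.mem_support.2 he
    exact this
  set z : G.E → ℝ := x e • y - y e • x with hz
  have hzm : z ∈ cycleSpace G := sub_mem (Submodule.smul_mem _ _ hym) (Submodule.smul_mem _ _ hxm)
  have hze : z e = 0 := by simp [hz, mul_comm]
  have hzsub : Function.support z ⊆ Function.support x := by
    intro e' he'
    simp only [Function.mem_support, hz, Pi.sub_apply, Pi.smul_apply, smul_eq_mul] at he'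
    by_contra hx0
    simp only [Function.mem_support, not_not] at hx0
    have hy0 : y e' = 0 := by
      by_contra hy0
      have : e' ∈ Function.support x := hsupp ▸ Function.mem_support.2 hy0
      exact (Function.mem_support.1 this) hx0
    rw [hx0, hy0] at he'; simp at he'
  have hz0 : z = 0 := by
    by_contra hz0
    have := hxmin z hzm hz0 hzsub
    have : e ∈ Function.support z := this ▸ Function.mem_support.2 he
    exact (Function.mem_support.1 this) hze
  have hkey : ∀ e', x e * y e' = y e * x e' := by
    intro e'
    have := congrFun hz0 e'
    simp only [hz, Pi.sub_apply, Pi.smul_apply, smul_eq_mul, Pi.zero_apply] at this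
    linarith
  have hxe2 : x e * x e = 1 := by
    rcases hxz e with h | h | h
    · exact absurd h he
    · rw [h]; norm_num
    · rw [h]; norm_num
  have hform : ∀ e', y e' = (x e * y e) * x e' := by
    intro e'
    have := hkey e'
    calc y e' = (x e * x e) * y e' := by rw [hxe2]; ring
    _ = x e * (x e * y e') := by ring
    _ = x e * (y e * x e') := by rw [hkey e']
    _ = (x e * y e) * x e' := by ring
  have hc : x e * y e = 1 ∨ x e * y e = -1 := by
    rcases hxz e with h | h | h <;> rcases hyz e with h' | h' | h' <;>
      first
      | (exact absurd h he)
      | (exact absurd h' hye)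
      | (rw [h, h']; norm_num)
  rcases hc with hc | hc
  · left; funext e'; rw [hform e', hc]; ring
  · right; funext e'; rw [hform e', hc]; simp

open Classical in
lemma exists_conformal_circuit {z : G.E → ℝ} (hz : z ∈ cycleSpace G) (hzpm : IsZPM G z)
    (hz0 : z ≠ 0) :
    ∃ x, IsDirCycle G x ∧ ∀ e, x e = 0 ∨ x e = z e := by
  classical
  set vin : G.E → G.V := fun e => if z e = 1 then G.head e else G.tail e with hvin
  set vout : G.E → G.V := fun e => if z e = 1 then G.tail e else G.head e with hvout
  -- key pointwise identity
  have hkey : ∀ v e, incMat G v e * z e =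
      (if z e ≠ 0 ∧ vin e = v then (1:ℝ) else 0)
        - (if z e ≠ 0 ∧ vout e = v then (1:ℝ) else 0) := by
    intro v e
    rcases hzpm e with h | h | h
    · simp [h]
    · have hvin1 : vin e = G.head e := by simp [hvin, h]
      have hvout1 : vout e = G.tail e := by simp [hvout, h]
      rw [hvin1, hvout1, h]
      by_cases hh : G.head e = v <;> by_cases ht : G.tail e = v <;>
        simp [incMat, hh, ht]
    · have h1 : ¬ (z e = 1) := by rw [h]; norm_num
      have hvin1 : vin e = G.tail e := by simp [hvin, h1]
      have hvout1 : vout e = G.head e := by simp [hvout, h1]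
      rw [hvin1, hvout1, h]
      by_cases hh : G.head e = v <;> by_cases ht : G.tail e = v <;>
        simp [incMat, hh, ht]
  -- flow conservation: in-degree equals out-degree on the support
  have hcons : ∀ v, (Finset.univ.filter (fun e => z e ≠ 0 ∧ vin e = v)).card
      = (Finset.univ.filter (fun e => z e ≠ 0 ∧ vout e = v)).card := by
    intro v
    have h0 := (mem_cycleSpace_iff G z).1 hz v
    rw [Finset.sum_congr rfl (fun e _ => hkey v e), Finset.sum_sub_distrib,
      Finset.sum_boole, Finset.sum_boole, sub_eq_zero] at h0
    exact_mod_cast h0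
  -- there is always a next (incoming) edge
  have hnext : ∀ e, ∃ e', z e ≠ 0 → (z e' ≠ 0 ∧ vout e' = vin e) := by
    intro e
    by_cases he : z e ≠ 0
    · have h1 : 0 < (Finset.univ.filter (fun e' => z e' ≠ 0 ∧ vin e' = vin e)).card :=
        Finset.card_pos.2 ⟨e, by simp [he]⟩
      rw [hcons (vin e)] at h1
      obtain ⟨e', he'⟩ := Finset.card_pos.1 h1
      simp only [Finset.mem_filter] at he'
      exact ⟨e', fun _ => ⟨he'.2.1, he'.2.2⟩⟩
    · exact ⟨e, fun h => absurd h he⟩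
  choose nxt hnxt using hnext
  obtain ⟨e0, he0⟩ : ∃ e, z e ≠ 0 := by
    by_contra h
    push_neg at h
    exact hz0 (funext fun e => h e)
  set f : ℕ → G.E := fun n => nxt^[n] e0 with hf
  have hfsucc : ∀ n, f (n + 1) = nxt (f n) := by
    intro n; simp [hf, Function.iterate_succ_apply']
  have hfz : ∀ n, z (f n) ≠ 0 := by
    intro n; induction n with
    | zero => simpa [hf] using he0
    | succ n ih => rw [hfsucc]; exact (hnxt (f n) ih).1
  have hfv : ∀ n, vout (f (n + 1)) = vin (f n) := by
    intro n; rw [hfsucc]; exact (hnxt (f n) (hfz n)).2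
  set g : ℕ → G.V := fun n => vin (f n) with hg
  -- pigeonhole
  obtain ⟨a, b, hab, heq⟩ := Finite.exists_ne_map_eq_of_infinite g
  have hPex : ∃ k, 0 < k ∧ ∃ i, g (i + k) = g i := by
    rcases Nat.lt_or_ge a b with h | h
    · exact ⟨b - a, by omega, a, by rw [show a + (b - a) = b by omega]; exact heq.symm⟩
    · have h' : b < a := by omega
      exact ⟨a - b, by omega, b, by rw [show b + (a - b) = a by omega]; exact heq⟩
  set k0 := Nat.find hPex with hk0def
  have hk0 := Nat.find_spec hPex
  obtain ⟨hk0pos, i0, hi0⟩ := hk0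
  -- injectivity of g on the window
  have hinj : ∀ s t, s < k0 → t < k0 → g (i0 + s) = g (i0 + t) → s = t := by
    have haux : ∀ s t, s < t → t < k0 → g (i0 + s) = g (i0 + t) → False := by
      intro s t hst ht hgeq
      have : 0 < t - s ∧ ∃ i, g (i + (t - s)) = g i :=
        ⟨by omega, i0 + s, by rw [show i0 + s + (t - s) = i0 + t by omega]; exact hgeq.symm⟩
      exact Nat.find_min hPex (by omega) this
    intro s t hs ht hgeq
    rcases Nat.lt_trichotomy s t with h | h | h
    · exact absurd (haux s t h ht hgeq) (fun x => x)
    · exact h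
    · exact absurd (haux t s h hs hgeq.symm) (fun x => x)
  -- the cycle's edges
  set ε : ℕ → G.E := fun t => f (i0 + t + 1) with hε
  have hε_out : ∀ t, vout (ε t) = g (i0 + t) := fun t => hfv (i0 + t)
  have hε_in : ∀ t, vin (ε t) = g (i0 + t + 1) := fun t => rfl
  have hε_z : ∀ t, z (ε t) ≠ 0 := fun t => hfz (i0 + t + 1)
  have hεinj : ∀ s t, s < k0 → t < k0 → ε s = ε t → s = t := by
    intro s t hs ht hst
    apply hinj s t hs ht
    rw [← hε_out, ← hε_out, hst]
  set x : G.E → ℝ := ∑ t ∈ Finset.range k0, z (ε t) • (Pi.single (ε t) (1 : ℝ) : G.E → ℝ) with hx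
  have hxapp : ∀ e, x e = ∑ t ∈ Finset.range k0, z (ε t) * (if e = ε t then 1 else 0) := by
    intro e
    rw [hx]
    rw [Finset.sum_apply]
    exact Finset.sum_congr rfl fun t _ => by simp [Pi.single_apply]
  have hxval : ∀ t, t < k0 → x (ε t) = z (ε t) := by
    intro t ht
    rw [hxapp]
    rw [Finset.sum_eq_single t]
    · simp
    · intro s hs hst
      have : ε t ≠ ε s := fun h => hst (hεinj s t (Finset.mem_range.1 hs) ht h.symm)
      simp [this]
    · intro h; exact absurd (Finset.mem_range.2 ht) h
  have hxval0 : ∀ e, (∀ t, t < k0 → ε t ≠ e) → x e = 0 := by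
    intro e he
    rw [hxapp]
    apply Finset.sum_eq_zero
    intro t ht
    have : e ≠ ε t := fun h => he t (Finset.mem_range.1 ht) h.symm
    simp [this]
  have hconf : ∀ e, x e = 0 ∨ x e = z e := by
    intro e
    by_cases h : ∃ t, t < k0 ∧ ε t = e
    · obtain ⟨t, ht, rfl⟩ := h
      exact Or.inr (hxval t ht)
    · push_neg at h
      exact Or.inl (hxval0 e h)
  have hsuppx : ∀ e, x e ≠ 0 ↔ ∃ t, t < k0 ∧ ε t = e := by
    intro e
    constructor
    · intro hxe
      by_contra h
      push_neg at h
      exact hxe (hxval0 e h)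
    · rintro ⟨t, ht, rfl⟩
      rw [hxval t ht]
      exact hε_z t
  -- x is in the cycle space
  have hxmem : x ∈ cycleSpace G := by
    rw [mem_cycleSpace_iff]
    intro v
    have hswap : ∑ e, incMat G v e * x e
        = ∑ t ∈ Finset.range k0, incMat G v (ε t) * z (ε t) := by
      calc ∑ e, incMat G v e * x e
          = ∑ e, ∑ t ∈ Finset.range k0, incMat G v e * (z (ε t) * (if e = ε t then 1 else 0)) := by
            refine Finset.sum_congr rfl fun e _ => ?_
            rw [hxapp e, Finset.mul_sum]
        _ = ∑ t ∈ Finset.range k0, ∑ e, incMat G v e * (z (ε t) * (if e = ε t then 1 else 0)) :=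
            Finset.sum_comm
        _ = ∑ t ∈ Finset.range k0, incMat G v (ε t) * z (ε t) := by
            refine Finset.sum_congr rfl fun t _ => ?_
            rw [Finset.sum_eq_single (ε t)]
            · simp
            · intro e _ he; simp [he]
            · intro h; exact absurd (Finset.mem_univ _) h
    rw [hswap]
    have : ∀ t ∈ Finset.range k0, incMat G v (ε t) * z (ε t)
        = (if g (i0 + t + 1) = v then (1:ℝ) else 0) - (if g (i0 + t) = v then (1:ℝ) else 0) := by
      intro t _
      rw [hkey v (ε t)]
      congr 1
      · simp [hε_z t, hε_in t]
      · simp [hε_z t, hε_out t]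
    rw [Finset.sum_congr rfl this]
    have htel := Finset.sum_range_sub (fun t => if g (i0 + t) = v then (1:ℝ) else 0) k0
    simp only [show ∀ t, i0 + (t+1) = i0 + t + 1 from fun t => by omega] at htel
    rw [htel]
    have hgk : g (i0 + k0) = g (i0 + 0) := by rw [Nat.add_zero]; exact hi0
    rw [hgk, sub_self]
  have hxne : x ≠ 0 := by
    intro h
    have := hxval 0 hk0pos
    rw [h] at this
    exact hε_z 0 this.symm
  have hxzpm : IsZPM G x := by
    intro e
    rcases hconf e with h | h
    · exact Or.inl h
    · rw [h]; exact hzpm e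
  refine ⟨x, ⟨hxmem, hxne, hxzpm, ?_⟩, hconf⟩
  -- minimality
  intro y hy hyne hysub
  have hysup : ∀ e, y e ≠ 0 → ∃ t, t < k0 ∧ ε t = e := by
    intro e hye
    exact (hsuppx e).1 (hysub (Function.mem_support.2 hye))
  obtain ⟨ey, hey⟩ : ∃ e, y e ≠ 0 := by
    by_contra h
    push_neg at h
    exact hyne (funext fun e => h e)
  obtain ⟨t0, ht0, rfl⟩ := hysup ey hey
  -- show y is nonzero on every edge of the cycle
  have hall : ∀ t, t < k0 → y (ε t) ≠ 0 := by
    rcases Nat.lt_or_ge 1 k0 with hk2 | hk1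
    swap
    · -- k0 = 1
      have hk01 : k0 = 1 := by omega
      intro t ht
      have : t = 0 := by omega
      have ht00 : t0 = 0 := by omega
      rw [this]; rw [ht00] at hey; exact hey
    · -- k0 ≥ 2 : no loops, local conservation
      have hnoloop : ∀ t, t < k0 → vin (ε t) ≠ vout (ε t) := by
        intro t ht h
        rw [hε_in, hε_out] at h
        rcases Nat.lt_or_ge (t + 1) k0 with h1 | h1
        · have := hinj (t + 1) t h1 ht h
          omega
        · have ht1 : t + 1 = k0 := by omega
          have : g (i0 + t + 1) = g (i0 + 0) := by
            rw [show i0 + t + 1 = i0 + k0 by omega]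
            simpa using hi0
          rw [this] at h
          have := hinj 0 t hk0pos ht h
          omega
      -- incidence values
      have hDvals : ∀ e, z e ≠ 0 → vin e ≠ vout e →
          (incMat G (vout e) e = -z e ∧ incMat G (vin e) e = z e ∧
           ∀ v, v ≠ vout e → v ≠ vin e → incMat G v e = 0) := by
        intro e hez hnl
        rcases hzpm e with h | h | h
        · exact absurd h hez
        · have hv1 : vin e = G.head e := by rw [hvin]; simp [h]
          have hv2 : vout e = G.tail e := by rw [hvout]; simp [h]
          rw [hv1, hv2] at hnl ⊢
          refine ⟨?_, ?_, ?_⟩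
          · simp [incMat, h, hnl, Ne.symm hnl]
          · simp [incMat, h, hnl, Ne.symm hnl]
          · intro v hv1' hv2'
            simp [incMat, Ne.symm hv1', Ne.symm hv2']
        · have h1 : ¬ (z e = 1) := by rw [h]; norm_num
          have hv1 : vin e = G.tail e := by rw [hvin]; simp [h1]
          have hv2 : vout e = G.head e := by rw [hvout]; simp [h1]
          rw [hv1, hv2] at hnl ⊢
          refine ⟨?_, ?_, ?_⟩
          · simp [incMat, h, hnl, Ne.symm hnl]
          · simp [incMat, h, hnl, Ne.symm hnl]
          · intro v hv1' hv2'
            simp [incMat, Ne.symm hv1', Ne.symm hv2']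
      -- conservation restricted to cycle edges
      have hsum : ∀ v, ∑ s ∈ Finset.range k0, incMat G v (ε s) * y (ε s) = 0 := by
        intro v
        have h0 := (mem_cycleSpace_iff G y).1 hy v
        have himg : ∑ s ∈ Finset.range k0, incMat G v (ε s) * y (ε s)
            = ∑ e ∈ (Finset.range k0).image ε, incMat G v e * y e := by
          rw [Finset.sum_image]
          intro s hs t ht hst
          exact hεinj s t (Finset.mem_range.1 hs) (Finset.mem_range.1 ht) hst
        rw [himg, ← h0]
        apply Finset.sum_subset (Finset.subset_univ _)
        intro e _ he
        have hy0 : y e = 0 := by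
          by_contra hne
          obtain ⟨t, ht, rfl⟩ := hysup e hne
          exact he (Finset.mem_image.2 ⟨t, Finset.mem_range.2 ht, rfl⟩)
        rw [hy0, mul_zero]
      -- the link between consecutive edges
      have hlink : ∀ t, 1 ≤ t → t < k0 → (y (ε (t - 1)) = 0 ↔ y (ε t) = 0) := by
        intro t h1t htk
        set v := g (i0 + t) with hv
        have hred : ∑ s ∈ Finset.range k0, incMat G v (ε s) * y (ε s)
            = incMat G v (ε (t-1)) * y (ε (t-1)) + incMat G v (ε t) * y (ε t) := by
          have hsubs : ({t - 1, t} : Finset ℕ) ⊆ Finset.range k0 := by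
            intro s hs
            simp only [Finset.mem_insert, Finset.mem_singleton] at hs
            rcases hs with h | h <;> (rw [h]; exact Finset.mem_range.2 (by omega))
          rw [← Finset.sum_subset hsubs]
          · rw [Finset.sum_insert (by simp; omega), Finset.sum_singleton]
          · intro s hs hsnot
            simp only [Finset.mem_insert, Finset.mem_singleton, not_or] at hsnot
            have hsk : s < k0 := Finset.mem_range.1 hs
            have hz1 : incMat G v (ε s) = 0 := by
              apply (hDvals (ε s) (hε_z s) (hnoloop s hsk)).2.2
              · rw [hε_out, hv]
                intro h
                exact hsnot.2 (hinj s t hsk htk h.symm)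
              · rw [hε_in, hv]
                intro h
                rcases Nat.lt_or_ge (s + 1) k0 with h1 | h1
                · have := hinj t (s+1) htk h1 h
                  omega
                · have hs1 : s + 1 = k0 := by omega
                  have : g (i0 + s + 1) = g (i0 + 0) := by
                    rw [show i0 + s + 1 = i0 + k0 by omega]
                    simpa using hi0
                  rw [this] at h
                  have := hinj t 0 htk (by omega) h
                  omega
            rw [hz1, zero_mul]
        have heq0 := hsum v
        rw [hred] at heq0
        have hc1 : incMat G v (ε (t-1)) = z (ε (t-1)) := by
          have := (hDvals (ε (t-1)) (hε_z (t-1)) (hnoloop (t-1) (by omega))).2.1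
          rw [hε_in] at this
          rw [show i0 + (t-1) + 1 = i0 + t by omega] at this
          exact this
        have hc2 : incMat G v (ε t) = -z (ε t) := by
          have := (hDvals (ε t) (hε_z t) (hnoloop t htk)).1
          rw [hε_out] at this
          exact this
        rw [hc1, hc2] at heq0
        constructor
        · intro h
          rw [h, mul_zero, zero_add] at heq0
          rcases mul_eq_zero.1 heq0 with h' | h'
          · exact absurd (neg_eq_zero.1 h') (hε_z t)
          · exact h'
        · intro h
          rw [h, mul_zero, add_zero] at heq0
          rcases mul_eq_zero.1 heq0 with h' | h'
          · exact absurd h' (hε_z (t-1))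
          · exact h'
      -- propagate nonvanishing from t0 in both directions
      have hdown : ∀ d, d ≤ t0 → y (ε (t0 - d)) ≠ 0 := by
        intro d
        induction d with
        | zero => intro _; simpa using hey
        | succ d ih =>
          intro hd
          have h1 := ih (by omega)
          have := hlink (t0 - d) (by omega) (by omega)
          rw [show t0 - d - 1 = t0 - (d+1) by omega] at this
          intro h
          exact h1 (this.1 h)
      have hup : ∀ d, t0 + d < k0 → y (ε (t0 + d)) ≠ 0 := by
        intro d
        induction d with
        | zero => intro _; simpa using hey
        | succ d ih =>
          intro hd
          have h1 := ih (by omega)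
          have := hlink (t0 + d + 1) (by omega) (by omega)
          rw [show t0 + d + 1 - 1 = t0 + d by omega] at this
          intro h
          exact h1 (this.2 h)
      intro t ht
      rcases le_or_gt t t0 with h | h
      · have := hdown (t0 - t) (by omega)
        rwa [show t0 - (t0 - t) = t by omega] at this
      · have := hup (t - t0) (by omega)
        rwa [show t0 + (t - t0) = t by omega] at this
  -- conclude support equality
  apply Set.Subset.antisymm hysub
  intro e he
  obtain ⟨t, ht, rfl⟩ := (hsuppx e).1 (Function.mem_support.1 he)
  exact Function.mem_support.2 (hall t ht)

lemma sameCycClass_sub_mem {O O' : G.E → ℝ} (h : SameCycClass G O O') :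
    O' - O ∈ cycleSpace G := by
  induction h with
  | rel a b hab =>
    obtain ⟨x, hx, -, rfl⟩ := hab
    have : a - x - a = -x := by abel
    rw [this]
    exact neg_mem hx.1
  | refl a => simp
  | symm a b _ ih =>
    have : a - b = -(b - a) := by abel
    rw [this]
    exact neg_mem ih
  | trans a b c _ _ ih1 ih2 =>
    have : c - a = (b - a) + (c - b) := by abel
    rw [this]
    exact add_mem ih1 ih2

open Classical in
lemma sig_sum_indicator (σ : CycSig G) {C0 : Set G.E} (hC0 : IsCycle G C0) :
    ∑ C ∈ Finset.univ.filter (fun C => IsCycle G C),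
      (if C = C0 then (1:ℝ) else 0) • σ.s C = σ.s C0 := by
  rw [Finset.sum_eq_single C0]
  · simp
  · intro C _ hC
    simp [hC]
  · intro h
    exact absurd (Finset.mem_filter.2 ⟨Finset.mem_univ _, hC0⟩) h

open Classical in
lemma transgen_accum (σ : CycSig G) {O O' : G.E → ℝ}
    (h : Relation.TransGen
      (fun A B => ∃ C, IsCycle G C ∧ InOrient G (-(σ.s C)) A ∧ B = A + σ.s C) O O') :
    ∃ a : Set G.E → ℝ, (∀ C, 0 ≤ a C) ∧ (∃ C, IsCycle G C ∧ 0 < a C) ∧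
      O' = O + ∑ C ∈ Finset.univ.filter (fun C => IsCycle G C), a C • σ.s C := by
  induction h with
  | single hab =>
    obtain ⟨C0, hC0, -, rfl⟩ := hab
    refine ⟨fun C => if C = C0 then 1 else 0, fun C => by by_cases h : C = C0 <;> simp [h],
      ⟨C0, hC0, by simp⟩, ?_⟩
    rw [sig_sum_indicator G σ hC0]
  | tail _ hbc ih =>
    obtain ⟨C0, hC0, -, rfl⟩ := hbc
    obtain ⟨a, ha0, ⟨C1, hC1, hC1pos⟩, hsum⟩ := ih
    refine ⟨fun C => a C + (if C = C0 then 1 else 0),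
      fun C => by by_cases h : C = C0 <;> simp [h] <;> linarith [ha0 C0, ha0 C],
      ⟨C1, hC1, by by_cases h : C1 = C0 <;> simp [h] <;> linarith [ha0 C0, hC1pos]⟩, ?_⟩
    have hdist : ∑ C ∈ Finset.univ.filter (fun C => IsCycle G C),
        (a C + (if C = C0 then (1:ℝ) else 0)) • σ.s C
        = (∑ C ∈ Finset.univ.filter (fun C => IsCycle G C), a C • σ.s C)
          + ∑ C ∈ Finset.univ.filter (fun C => IsCycle G C),
              (if C = C0 then (1:ℝ) else 0) • σ.s C := by
      rw [← Finset.sum_add_distrib]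
      exact Finset.sum_congr rfl fun C _ => add_smul _ _ _
    rw [hdist, sig_sum_indicator G σ hC0, hsum]
    abel

open Classical in
lemma acyclic_no_return (σ : CycSig G) (hac : AcyclicSig G σ) {O O' : G.E → ℝ}
    (h : Relation.TransGen
      (fun A B => ∃ C, IsCycle G C ∧ InOrient G (-(σ.s C)) A ∧ B = A + σ.s C) O O') :
    O ≠ O' := by
  rintro rfl
  obtain ⟨a, ha0, ⟨C1, hC1, hC1pos⟩, hsum⟩ := transgen_accum G σ h
  have h0 : ∑ C ∈ Finset.univ.filter (fun C => IsCycle G C), a C • σ.s C = 0 :=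
    (left_eq_add.1 hsum)
  have := hac a ha0 h0 C1 hC1
  exact absurd this (by linarith)

end GB

open GB in
theorem stmt_5 (G : GB.Graph) (hconn : GB.Connected G)
    (σ : GB.CycSig G) (hac : GB.AcyclicSig G σ)
    (O : G.E → ℝ) (hO : GB.IsOrientation G O) :
    ∃! O' : G.E → ℝ, GB.IsOrientation G O' ∧ GB.SigCompatible G σ O' ∧
      GB.SameCycClass G O O' := by
  classical
  -- the step relation on the (finite) type of orientations
  let step : {f : G.E → ℝ // GB.IsOrientation G f} → {f : G.E → ℝ // GB.IsOrientation G f} → Prop :=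
    fun A B => ∃ C, GB.IsCycle G C ∧ GB.InOrient G (-(σ.s C)) A.1 ∧ B.1 = A.1 + σ.s C
  haveI hfin : Finite {f : G.E → ℝ // GB.IsOrientation G f} := by
    apply Finite.of_injective (fun A : {f : G.E → ℝ // GB.IsOrientation G f} =>
      (fun e => A.1 e = 1 : G.E → Prop))
    intro A B h
    apply Subtype.ext
    funext e
    have he := congrFun h e
    simp only [eq_iff_iff] at he
    rcases A.2 e with h1 | h1 <;> rcases B.2 e with h2 | h2 <;> rw [h1, h2] <;>
      rw [h1, h2] at he <;> norm_num at he
  have hirr : ∀ A : {f : G.E → ℝ // GB.IsOrientation G f}, ¬ Relation.TransGen step A A := by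
    intro A hA
    have hlift : Relation.TransGen
        (fun A B : G.E → ℝ => ∃ C, GB.IsCycle G C ∧ GB.InOrient G (-(σ.s C)) A ∧ B = A + σ.s C)
        A.1 A.1 :=
      Relation.TransGen.lift (f := Subtype.val) (fun a b hab => hab) A A hA
    exact GB.acyclic_no_return G σ hac hlift rfl
  haveI : IsTrans {f : G.E → ℝ // GB.IsOrientation G f}
      (fun a b => Relation.TransGen step b a) := ⟨fun a b c h1 h2 => h2.trans h1⟩
  haveI : IsIrrefl {f : G.E → ℝ // GB.IsOrientation G f}
      (fun a b => Relation.TransGen step b a) := ⟨fun a h => hirr a h⟩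
  have hwf : WellFounded (fun a b : {f : G.E → ℝ // GB.IsOrientation G f} =>
      Relation.TransGen step b a) := Finite.wellFounded_of_trans_of_irrefl _
  have hsink : ∀ A : {f : G.E → ℝ // GB.IsOrientation G f},
      ∃ B, Relation.ReflTransGen step A B ∧ ∀ Bc, ¬ step B Bc := by
    intro A
    refine hwf.induction
      (C := fun A => ∃ B, Relation.ReflTransGen step A B ∧ ∀ Bc, ¬ step B Bc) A ?_
    intro A ih
    by_cases h : ∃ B, step A B
    · obtain ⟨B, hB⟩ := h
      obtain ⟨Bs, hr1, hr2⟩ := ih B (Relation.TransGen.single hB)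
      exact ⟨Bs, Relation.ReflTransGen.head hB hr1, hr2⟩
    · push_neg at h
      exact ⟨A, Relation.ReflTransGen.refl, h⟩
  have hclass : ∀ A B : {f : G.E → ℝ // GB.IsOrientation G f},
      Relation.ReflTransGen step A B → GB.SameCycClass G A.1 B.1 := by
    intro A B h
    induction h with
    | refl => exact Relation.EqvGen.refl _
    | @tail b c hab hbc ih =>
      obtain ⟨C, hC, hin, heq⟩ := hbc
      refine Relation.EqvGen.trans _ _ _ ih (Relation.EqvGen.rel _ _ ⟨-(σ.s C), ?_, hin, ?_⟩)
      · exact GB.isDirCycle_neg G (σ.mem C hC).1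
      · rw [heq]; abel
  obtain ⟨B, hreach, hBsink⟩ := hsink ⟨O, hO⟩
  have hBcomp : GB.SigCompatible G σ B.1 := by
    intro x hx hin
    have hCyc : GB.IsCycle G (Function.support x) := ⟨x, hx, rfl⟩
    obtain ⟨hsC, hsupp⟩ := σ.mem _ hCyc
    rcases GB.dirCycle_eq_or_neg G hx hsC (le_of_eq hsupp) with h | h
    · exact h.symm
    · exfalso
      have hxneg : x = -(σ.s (Function.support x)) := by rw [h]; simp
      have horient : GB.IsOrientation G (B.1 - x) := GB.orientation_sub G B.2 hin
      refine hBsink ⟨B.1 - x, horient⟩ ⟨Function.support x, hCyc, ?_, ?_⟩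
      · rw [← hxneg]; exact hin
      · show B.1 - x = B.1 + σ.s (Function.support x)
        rw [h]; abel
  have huniq : ∀ O1 O2 : G.E → ℝ, GB.IsOrientation G O1 → GB.IsOrientation G O2 →
      GB.SigCompatible G σ O1 → GB.SigCompatible G σ O2 →
      GB.SameCycClass G O1 O2 → O1 = O2 := by
    intro O1 O2 h1 h2 hc1 hc2 hcls
    by_contra hne
    have hzmem : O1 - O2 ∈ GB.cycleSpace G :=
      GB.sameCycClass_sub_mem G (Relation.EqvGen.symm _ _ hcls)
    have hzzpm := GB.orientation_diff_zpm G h1 h2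
    have hz0 : O1 - O2 ≠ 0 := sub_ne_zero.2 hne
    obtain ⟨x, hx, hconf⟩ := GB.exists_conformal_circuit G hzmem hzzpm hz0
    have hin1 : GB.InOrient G x O1 := by
      intro e
      rcases hconf e with h | h
      · exact Or.inl h
      · by_cases hx0 : x e = 0
        · exact Or.inl hx0
        · right
          rw [h] at hx0 ⊢
          rcases h1 e with ha | ha <;> rcases h2 e with hb | hb <;>
            simp only [GB.dir, Pi.sub_apply, ha, hb] at hx0 ⊢ <;> norm_num at hx0 <;> norm_num
    have hin2 : GB.InOrient G (-x) O2 := by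
      intro e
      rcases hconf e with h | h
      · exact Or.inl (by simp [h])
      · by_cases hx0 : x e = 0
        · exact Or.inl (by simp [hx0])
        · right
          rw [h] at hx0
          rw [Pi.neg_apply, h]
          rcases h1 e with ha | ha <;> rcases h2 e with hb | hb <;>
            simp only [GB.dir, Pi.sub_apply, ha, hb] at hx0 ⊢ <;> norm_num at hx0 <;> norm_num
    have e1 := hc1 x hx hin1
    have e2 := hc2 (-x) (GB.isDirCycle_neg G hx) hin2
    have hsupp : Function.support (-x) = Function.support x := by
      ext e; simp
    rw [hsupp, ← e1] at e2
    have hx0 : x = 0 := by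
      funext e
      have h' := congrFun e2 e
      rw [Pi.neg_apply] at h'
      have : x e = 0 := by linarith
      simpa using this
    exact hx.2.1 hx0
  refine ⟨B.1, ⟨B.2, hBcomp, hclass ⟨O, hO⟩ B hreach⟩, ?_⟩
  rintro y ⟨hy1, hy2, hy3⟩
  exact huniq y B.1 hy1 B.2 hy2 hBcomp
    (Relation.EqvGen.trans _ _ _ (Relation.EqvGen.symm _ _ hy3) (hclass ⟨O, hO⟩ B hreach))
end

section
/- Fix acyclic signatures σ (on cycles) and σ* (on cocycles) of a connected finite graph G, and let T be a spanning tree. Let O⃗ = g_{σ,σ*}(T) be the orientation in which each e ∉ T is oriented according to σ(C(T,e)) and each e ∈ T according to σ*(C*(T,e)). If C⃗ ∈ ker(D) ∩ Z^E is such that every arc e⃗ ∈ C⃗ with underlying edge not in T lies in O⃗, then C⃗ is a nonnegative integer combination of σ-compatible directed cycles; in particular, if C⃗ is a directed cycle satisfying this condition, then C⃗ ∈ σ. -/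
open Function

namespace GBAux

open GB Function Finset Classical

variable (G : GB.Graph)

noncomputable def suppF (v : G.E → ℝ) : Finset G.E :=
  Finset.univ.filter (fun e => v e ≠ 0)

lemma coe_suppF (v : G.E → ℝ) : (suppF G v : Set G.E) = support v := by
  ext e; simp [suppF, support]

lemma suppF_subset {v w : G.E → ℝ} (h : support v ⊆ support w) :
    suppF G v ⊆ suppF G w := by
  intro e he
  simp only [suppF, mem_filter, mem_univ, true_and] at he ⊢
  exact h he

lemma supp_eq_of_suppF_eq {v w : G.E → ℝ} (h : suppF G v = suppF G w) :
    support v = support w := by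
  rw [← coe_suppF, ← coe_suppF, h]

/-- choose a support-minimal nonzero vector of a subspace within a support bound -/
lemma exists_minimal (p : Submodule ℝ (G.E → ℝ)) (w : G.E → ℝ) (hw : w ∈ p)
    (hw0 : w ≠ 0) :
    ∃ v, v ∈ p ∧ v ≠ 0 ∧ support v ⊆ support w ∧
      ∀ y, y ∈ p → y ≠ 0 → support y ⊆ support w →
        (suppF G v).card ≤ (suppF G y).card := by
  classical
  let s : Set ℕ := {n | ∃ v, v ∈ p ∧ v ≠ 0 ∧ support v ⊆ support w ∧ (suppF G v).card = n}
  have hne : ((suppF G w).card) ∈ s := ⟨w, hw, hw0, subset_rfl, rfl⟩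
  obtain ⟨v, hv, hv0, hvs, hvc⟩ := Nat.sInf_mem (⟨_, hne⟩ : s.Nonempty)
  refine ⟨v, hv, hv0, hvs, fun y hy hy0 hys => ?_⟩
  rw [hvc]
  exact Nat.sInf_le ⟨y, hy, hy0, hys, rfl⟩

/-- a support-minimal vector bounded vector is "minimal" in the IsDirCycle sense,
given any nonzero ZPM vector with support inside it. -/
lemma minimal_of_card_minimal (p : Submodule ℝ (G.E → ℝ)) {v : G.E → ℝ}
    (hmin : ∀ y, y ∈ p → y ≠ 0 → support y ⊆ support v →
      (suppF G v).card ≤ (suppF G y).card) :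
    ∀ y, y ∈ p → y ≠ 0 → support y ⊆ support v → support y = support v := by
  intro y hy hy0 hys
  have h1 : suppF G y ⊆ suppF G v := suppF_subset G hys
  have h2 := hmin y hy hy0 hys
  exact supp_eq_of_suppF_eq G (Finset.eq_of_subset_of_card_le h1 h2)

/-- any vector of cycleSpace supported in the support of a directed cycle is a multiple of it -/
lemma dirCycle_scalar {x : G.E → ℝ} (hx : IsDirCycle G x) {y : G.E → ℝ}
    (hy : y ∈ cycleSpace G) (hys : support y ⊆ support x) :
    ∃ c : ℝ, y = c • x := by
  obtain ⟨hxm, hx0, hxz, hxmin⟩ := hx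
  by_cases hy0 : y = 0
  · exact ⟨0, by simp [hy0]⟩
  obtain ⟨e0, he0⟩ : ∃ e0, x e0 ≠ 0 := by
    by_contra h; push_neg at h; exact hx0 (funext fun e => h e)
  refine ⟨y e0 / x e0, ?_⟩
  by_contra hne
  set c := y e0 / x e0 with hc
  set d := y - c • x with hd
  have hd0 : d ≠ 0 := fun h => hne (by rw [← sub_eq_zero]; exact h)
  have hdm : d ∈ cycleSpace G := Submodule.sub_mem _ hy (Submodule.smul_mem _ _ hxm)
  have hds : support d ⊆ support x := by
    intro e he
    by_contra hxe
    simp only [mem_support, not_not] at hxe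
    have hye : y e = 0 := by
      by_contra h; exact (hys (mem_support.mpr h)) hxe
    apply he
    simp [hd, hye, hxe]
  have := hxmin d hdm hd0 hds
  have he0' : e0 ∈ support d := this ▸ mem_support.mpr he0
  apply mem_support.mp he0'
  simp [hd, hc]
  field_simp
  ring

end GBAux

namespace GBAux
open GB Function Finset Classical
variable (G : GB.Graph)

lemma transpose_mulVecLin (g : G.V → ℝ) (e : G.E) :
    ((incMat G).transpose.mulVecLin g) e = g (G.head e) - g (G.tail e) := by
  classical
  simp only [Matrix.mulVecLin_apply, Matrix.mulVec, Matrix.transpose_apply, incMat,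
    dotProduct]
  have : ∀ u : G.V, ((if G.head e = u then (1:ℝ) else 0) - (if G.tail e = u then 1 else 0)) * g u
      = (if G.head e = u then g u else 0) - (if G.tail e = u then g u else 0) := by
    intro u; by_cases h1 : G.head e = u <;> by_cases h2 : G.tail e = u <;> simp [h1, h2]
  rw [Finset.sum_congr rfl (fun u _ => this u), Finset.sum_sub_distrib]
  simp [Finset.sum_ite_eq]

end GBAux

namespace GBAux
open GB Function Finset Classical
variable (G : GB.Graph)

lemma zpm_in_cocyc {v : G.E → ℝ} (hv : v ∈ cocycleSpace G) (hv0 : v ≠ 0) :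
    ∃ z, z ∈ cocycleSpace G ∧ z ≠ 0 ∧ IsZPM G z ∧ support z ⊆ support v := by
  classical
  obtain ⟨g, hg⟩ := hv
  obtain ⟨e0, he0⟩ : ∃ e0, v e0 ≠ 0 := by
    by_contra h; push_neg at h; exact hv0 (funext h)
  have hgv : ∀ e, v e = g (G.head e) - g (G.tail e) := by
    intro e; rw [← hg]; exact (transpose_mulVecLin G g e)
  have hne0 : g (G.head e0) ≠ g (G.tail e0) := by
    intro h; apply he0; rw [hgv e0, h, sub_self]
  set m := max (g (G.head e0)) (g (G.tail e0)) with hm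
  set χ : G.V → ℝ := fun u => if m ≤ g u then 1 else 0 with hχ
  set z := (incMat G).transpose.mulVecLin χ with hz
  have hze : ∀ e, z e = χ (G.head e) - χ (G.tail e) := fun e => transpose_mulVecLin G χ e
  refine ⟨z, LinearMap.mem_range.mpr ⟨χ, rfl⟩, ?_, ?_, ?_⟩
  · intro h
    have h0 : z e0 = 0 := by rw [h]; rfl
    rw [hze e0] at h0
    rcases lt_or_gt_of_ne hne0 with hlt | hlt
    · have hh : ¬ m ≤ g (G.head e0) := not_le.mpr (lt_of_lt_of_le hlt (le_max_right _ _))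
      have ht : m ≤ g (G.tail e0) := max_le (le_of_lt hlt) le_rfl
      simp [hχ, hh, ht] at h0
    · have ht : ¬ m ≤ g (G.tail e0) := not_le.mpr (lt_of_lt_of_le hlt (le_max_left _ _))
      have hh : m ≤ g (G.head e0) := max_le le_rfl (le_of_lt hlt)
      simp [hχ, hh, ht] at h0
  · intro e
    rw [hze e]
    by_cases h1 : m ≤ g (G.head e) <;> by_cases h2 : m ≤ g (G.tail e) <;>
      simp [hχ, h1, h2]
  · intro e he
    rw [mem_support, hze e] at he
    rw [mem_support, hgv e]
    intro hcon
    apply he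
    have h3 : g (G.head e) = g (G.tail e) := by linarith [sub_eq_zero.mp hcon]
    simp [hχ, h3]

/-- every nonzero cocycle-space vector contains a directed cocycle -/
lemma cocyc_exists {w : G.E → ℝ} (hw : w ∈ cocycleSpace G) (hw0 : w ≠ 0) :
    ∃ z, IsDirCocycle G z ∧ support z ⊆ support w := by
  obtain ⟨v, hv, hv0, hvs, hmin⟩ := exists_minimal G (cocycleSpace G) w hw hw0
  obtain ⟨z, hz, hz0, hzz, hzs⟩ := zpm_in_cocyc G hv hv0
  have hzw : support z ⊆ support w := hzs.trans hvs
  have hcard : (suppF G v).card ≤ (suppF G z).card := hmin z hz hz0 hzw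
  have hsupp : support z = support v :=
    supp_eq_of_suppF_eq G (Finset.eq_of_subset_of_card_le (suppF_subset G hzs) hcard)
  refine ⟨z, ⟨hz, hz0, hzz, ?_⟩, hzw⟩
  intro y hy hy0 hys
  rw [hsupp] at hys ⊢
  have := hmin y hy hy0 (hys.trans hvs)
  exact supp_eq_of_suppF_eq G (Finset.eq_of_subset_of_card_le (suppF_subset G hys) this)

end GBAux

namespace GBAux
open GB Function Finset Classical
variable (G : GB.Graph)

lemma ker_apply {v : G.E → ℝ} (hv : v ∈ cycleSpace G) (u : G.V) :
    ∑ e, incMat G u e * v e = 0 := by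
  have := congrFun (LinearMap.mem_ker.mp hv) u
  simpa [DMap, Matrix.mulVecLin_apply, Matrix.mulVec, dotProduct] using this

lemma DMap_single (e : G.E) :
    DMap G (fun f => if f = e then (1:ℝ) else 0) = fun w => incMat G w e := by
  funext w
  simp [DMap, Matrix.mulVecLin_apply, Matrix.mulVec, dotProduct]

lemma step_lemma {v : G.E → ℝ} (hv : v ∈ cycleSpace G)
    (hnl : ∀ e, v e ≠ 0 → G.head e ≠ G.tail e) :
    ∀ e u, v e ≠ 0 → (G.head e = u ∨ G.tail e = u) →
      ∃ f, f ≠ e ∧ v f ≠ 0 ∧ (G.head f = u ∨ G.tail f = u) := by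
  intro e u he hinc
  by_contra hcon
  push_neg at hcon
  have hsum := ker_apply G hv u
  have heq : ∑ f, incMat G u f * v f = incMat G u e * v e := by
    apply Finset.sum_eq_single e
    · intro f _ hf
      by_cases hvf : v f = 0
      · simp [hvf]
      · obtain ⟨h1, h2⟩ := hcon f hf hvf
        simp [incMat, h1, h2]
    · simp
  rw [heq] at hsum
  rcases hinc with h | h
  · have ht : G.tail e ≠ u := by rw [← h]; exact fun h' => (hnl e he) h'.symm
    rw [incMat] at hsum
    simp [h, ht] at hsum
    exact he hsum
  · have hh : G.head e ≠ u := by rw [← h]; exact hnl e he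
    rw [incMat] at hsum
    simp [h, hh] at hsum
    exact he hsum

end GBAux

namespace GBAux
open GB Function Finset Classical
variable (G : GB.Graph)

lemma zpm_in_cyc {v : G.E → ℝ} (hv : v ∈ cycleSpace G) (hv0 : v ≠ 0) :
    ∃ z, z ∈ cycleSpace G ∧ z ≠ 0 ∧ IsZPM G z ∧ support z ⊆ support v := by
  classical
  obtain ⟨e0, he0⟩ : ∃ e0, v e0 ≠ 0 := by
    by_contra h; push_neg at h; exact hv0 (funext h)
  by_cases hloop : ∃ e, v e ≠ 0 ∧ G.head e = G.tail e
  · obtain ⟨e, hve, hl⟩ := hloop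
    refine ⟨fun f => if f = e then 1 else 0, ?_, ?_, ?_, ?_⟩
    · rw [cycleSpace, LinearMap.mem_ker, DMap_single]
      funext w
      simp [incMat, hl]
    · intro h
      have := congrFun h e
      simp at this
    · intro f; by_cases h : f = e <;> simp [h]
    · intro f hf
      rw [mem_support] at hf ⊢
      by_cases h : f = e
      · rwa [h]
      · simp [h] at hf
  push_neg at hloop
  have hnl : ∀ e, v e ≠ 0 → G.head e ≠ G.tail e := hloop
  have hstep' : ∀ e u, ∃ f, v e ≠ 0 → (G.head e = u ∨ G.tail e = u) →
      (f ≠ e ∧ v f ≠ 0 ∧ (G.head f = u ∨ G.tail f = u)) := by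
    intro e u
    by_cases h : v e ≠ 0 ∧ (G.head e = u ∨ G.tail e = u)
    · obtain ⟨f, hf⟩ := step_lemma G hv hnl e u h.1 h.2
      exact ⟨f, fun _ _ => hf⟩
    · exact ⟨e, fun h1 h2 => absurd ⟨h1, h2⟩ h⟩
  choose Fn hFn using hstep'
  set W : ℕ → G.E × G.V := fun n => Nat.rec (e0, G.head e0)
    (fun _ p => (Fn p.1 p.2,
      if G.tail (Fn p.1 p.2) = p.2 then G.head (Fn p.1 p.2) else G.tail (Fn p.1 p.2))) n
    with hW
  set eW : ℕ → G.E := fun n => (W n).1 with heW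
  set uW : ℕ → G.V := fun n => (W n).2 with huW
  have hWs1 : ∀ n, eW (n+1) = Fn (eW n) (uW n) := fun n => rfl
  have hWs2 : ∀ n, uW (n+1) =
      (if G.tail (Fn (eW n) (uW n)) = uW n then G.head (Fn (eW n) (uW n))
        else G.tail (Fn (eW n) (uW n))) := fun n => rfl
  have Inv : ∀ n, v (eW n) ≠ 0 ∧ (G.head (eW n) = uW n ∨ G.tail (eW n) = uW n) := by
    intro n
    induction n with
    | zero => exact ⟨he0, Or.inl rfl⟩
    | succ n ih =>
      obtain ⟨h1, h2, h3⟩ := hFn (eW n) (uW n) ih.1 ih.2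
      rw [hWs1 n, hWs2 n]
      refine ⟨h2, ?_⟩
      by_cases hc : G.tail (Fn (eW n) (uW n)) = uW n
      · rw [if_pos hc]; exact Or.inl rfl
      · rw [if_neg hc]; exact Or.inr rfl
  have K1 : ∀ n, v (eW n) ≠ 0 := fun n => (Inv n).1
  have K2 : ∀ n, eW (n+1) ≠ eW n := by
    intro n
    rw [hWs1 n]
    exact (hFn (eW n) (uW n) (Inv n).1 (Inv n).2).1
  have K3 : ∀ n, (G.tail (eW (n+1)) = uW n ∧ G.head (eW (n+1)) = uW (n+1)) ∨
      (G.head (eW (n+1)) = uW n ∧ G.tail (eW (n+1)) = uW (n+1)) := by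
    intro n
    obtain ⟨h1, h2, h3⟩ := hFn (eW n) (uW n) (Inv n).1 (Inv n).2
    rw [hWs1 n, hWs2 n]
    by_cases hc : G.tail (Fn (eW n) (uW n)) = uW n
    · left; exact ⟨hc, by rw [if_pos hc]⟩
    · right
      rcases h3 with h | h
      · exact ⟨h, by rw [if_neg hc]⟩
      · exact absurd h hc
  set sgn : ℕ → ℝ := fun n => if G.tail (eW (n+1)) = uW n then 1 else -1 with hsgn
  have K4 : ∀ n w, sgn n * incMat G w (eW (n+1)) =
      (if uW (n+1) = w then 1 else 0) - (if uW n = w then 1 else 0) := by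
    intro n w
    have hnl' : G.head (eW (n+1)) ≠ G.tail (eW (n+1)) := hnl _ (K1 (n+1))
    rcases K3 n with ⟨h1, h2⟩ | ⟨h1, h2⟩
    · have hs : sgn n = 1 := if_pos h1
      rw [hs, one_mul]
      simp only [incMat]
      rw [h1, h2]
    · have hs : sgn n = -1 := by
        rw [hsgn]
        simp only
        rw [if_neg]
        intro hcon
        exact hnl' (h1.trans hcon.symm)
      rw [hs]
      simp only [incMat]
      rw [h1, h2]
      ring
  have hpig : ∃ k, ∃ j, j < k ∧ uW j = uW k := by
    obtain ⟨a, b, hab, hu⟩ := Finite.exists_ne_map_eq_of_infinite uW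
    rcases lt_or_gt_of_ne hab with h | h
    · exact ⟨b, a, h, hu⟩
    · exact ⟨a, b, h, hu.symm⟩
  set K := Nat.find hpig with hK
  obtain ⟨j, hjK, hujK⟩ := Nat.find_spec hpig
  have inj : ∀ a b, a < b → b < K → uW a ≠ uW b := by
    intro a b hab hbK hu
    exact Nat.find_min hpig hbK ⟨a, hab, hu⟩
  have veq : ∀ x y, j ≤ x → x < y → y ≤ K → uW x = uW y → x = j ∧ y = K := by
    intro x y hjx hxy hyK hu
    rcases lt_or_eq_of_le hyK with h | h
    · exact absurd hu (inj x y hxy h)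
    · subst h
      rcases lt_or_eq_of_le hjx with h' | h'
      · exact absurd (hujK.trans hu.symm) (inj j x h' hxy)
      · exact ⟨h'.symm, rfl⟩
  have dist : ∀ a b, j ≤ a → a < b → b < K → eW (a+1) ≠ eW (b+1) := by
    intro a b hja hab hbK hee
    have hconsec : ¬ (a + 1 = b) ∨ True := Or.inr trivial
    rcases K3 a with ⟨ta, ha⟩ | ⟨ta, ha⟩ <;> rcases K3 b with ⟨tb, hb⟩ | ⟨tb, hb⟩
    · -- tails: uW a = uW b
      have : uW a = uW b := by rw [← ta, ← tb, hee]
      exact absurd (veq a b hja hab hbK.le this).2 (Nat.ne_of_lt hbK)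
    · -- L for a, R for b : uW (a+1) = head(ea) = head(eb)?? careful
      -- a: tail = uW a, head = uW (a+1); b: head = uW b, tail = uW (b+1)
      have h4 : uW (a+1) = uW b := by rw [← ha, ← tb, hee]
      rcases lt_or_eq_of_le (Nat.succ_le_of_lt hab) with h | h
      · exact absurd (veq (a+1) b (by omega) h hbK.le h4).2 (Nat.ne_of_lt hbK)
      · rw [← h] at hee
        exact K2 (a+1) (hee.symm)
    · -- R for a, L for b: a: head = uW a, tail = uW (a+1); b: tail = uW b, head = uW (b+1)
      have h4 : uW (a+1) = uW b := by rw [← ha, ← tb, hee]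
      rcases lt_or_eq_of_le (Nat.succ_le_of_lt hab) with h | h
      · exact absurd (veq (a+1) b (by omega) h hbK.le h4).2 (Nat.ne_of_lt hbK)
      · rw [← h] at hee
        exact K2 (a+1) (hee.symm)
    · -- heads: uW a = uW b
      have : uW a = uW b := by rw [← ta, ← tb, hee]
      exact absurd (veq a b hja hab hbK.le this).2 (Nat.ne_of_lt hbK)
  set δ : G.E → (G.E → ℝ) := fun ee f => if f = ee then 1 else 0 with hδ
  set z : G.E → ℝ := ∑ i ∈ Finset.range (K - j), sgn (j + i) • δ (eW ((j+i)+1)) with hz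
  have hzf : ∀ f, z f = ∑ i ∈ Finset.range (K - j),
      (if f = eW ((j+i)+1) then sgn (j+i) else 0) := by
    intro f
    rw [hz, Finset.sum_apply]
    refine Finset.sum_congr rfl (fun i _ => ?_)
    by_cases h : f = eW ((j+i)+1) <;> simp [hδ, h]
  have hsgn1 : ∀ n, sgn n = 1 ∨ sgn n = -1 := by
    intro n
    rw [hsgn]
    simp only
    by_cases h : G.tail (eW (n+1)) = uW n
    · exact Or.inl (if_pos h)
    · exact Or.inr (if_neg h)
  have hKj : 0 < K - j := by omega
  refine ⟨z, ?_, ?_, ?_, ?_⟩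
  · -- z ∈ cycleSpace
    rw [cycleSpace, LinearMap.mem_ker, hz, map_sum]
    have hterm : ∀ i : ℕ, DMap G (sgn (j+i) • δ (eW ((j+i)+1))) =
        fun w => sgn (j+i) * incMat G w (eW ((j+i)+1)) := by
      intro i
      rw [LinearMap.map_smul, hδ, DMap_single]
      funext w
      simp
    rw [Finset.sum_congr rfl (fun i _ => hterm i)]
    funext w
    rw [Finset.sum_apply]
    have : ∀ i ∈ Finset.range (K - j), sgn (j+i) * incMat G w (eW ((j+i)+1)) =
        (if uW (j+(i+1)) = w then (1:ℝ) else 0) - (if uW (j+i) = w then 1 else 0) := by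
      intro i _
      exact K4 (j+i) w
    rw [Finset.sum_congr rfl this, Finset.sum_range_sub (fun i => if uW (j+i) = w then (1:ℝ) else 0)]
    have hjKj : j + (K - j) = K := by omega
    rw [hjKj]
    simp only [Nat.add_zero]
    rw [← hujK]
    simp
  · -- z ≠ 0
    intro h0
    have := congrFun h0 (eW (j+1))
    rw [hzf] at this
    rw [Finset.sum_eq_single_of_mem 0 (Finset.mem_range.mpr hKj)] at this
    · rw [if_pos rfl] at this
      rcases hsgn1 (j+0) with h | h <;> rw [h] at this <;> norm_num at this
    · intro i hi hi0
      rw [if_neg]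
      intro hcon
      exact dist j (j+i) le_rfl (by omega) (by simp at hi; omega) (by simpa using hcon)
  · -- ZPM
    intro f
    by_cases hex : ∃ i ∈ Finset.range (K - j), f = eW ((j+i)+1)
    · obtain ⟨i0, hi0r, hi0⟩ := hex
      have : z f = sgn (j+i0) := by
        rw [hzf]
        rw [Finset.sum_eq_single_of_mem i0 hi0r]
        · rw [if_pos hi0]
        · intro i hi hii0
          rw [if_neg]
          intro hcon
          rcases Nat.lt_or_ge i i0 with h | h
          · exact dist (j+i) (j+i0) (by omega) (by omega) (by simp at hi0r; omega)
              (by rw [← hcon, ← hi0])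
          · exact dist (j+i0) (j+i) (by omega) (by omega) (by simp at hi; omega)
              (by rw [← hcon, ← hi0])
      rw [this]
      rcases hsgn1 (j+i0) with h | h
      · exact Or.inr (Or.inl h)
      · exact Or.inr (Or.inr h)
    · push_neg at hex
      left
      rw [hzf]
      exact Finset.sum_eq_zero (fun i hi => if_neg (hex i hi))
  · -- support
    intro f hf
    rw [mem_support] at hf ⊢
    rw [hzf] at hf
    obtain ⟨i, hir, hi⟩ : ∃ i ∈ Finset.range (K - j), f = eW ((j+i)+1) := by
      by_contra h
      push_neg at h
      exact hf (Finset.sum_eq_zero (fun i hi => if_neg (h i hi)))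
    rw [hi]
    exact K1 ((j+i)+1)

/-- every nonzero cycle-space vector contains a directed cycle -/
lemma cyc_exists {w : G.E → ℝ} (hw : w ∈ cycleSpace G) (hw0 : w ≠ 0) :
    ∃ z, IsDirCycle G z ∧ support z ⊆ support w := by
  obtain ⟨v, hv, hv0, hvs, hmin⟩ := exists_minimal G (cycleSpace G) w hw hw0
  obtain ⟨z, hz, hz0, hzz, hzs⟩ := zpm_in_cyc G hv hv0
  have hzw : support z ⊆ support w := hzs.trans hvs
  have hcard : (suppF G v).card ≤ (suppF G z).card := hmin z hz hz0 hzw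
  have hsupp : support z = support v :=
    supp_eq_of_suppF_eq G (Finset.eq_of_subset_of_card_le (suppF_subset G hzs) hcard)
  refine ⟨z, ⟨hz, hz0, hzz, ?_⟩, hzw⟩
  intro y hy hy0 hys
  rw [hsupp] at hys ⊢
  have := hmin y hy hy0 (hys.trans hvs)
  exact supp_eq_of_suppF_eq G (Finset.eq_of_subset_of_card_le (suppF_subset G hys) this)

end GBAux

namespace GBAux
open GB Function Finset Classical
variable (G : GB.Graph)

lemma cyc_inj {T : Finset G.E} (hT : IsSpanningTree G T) :
    ∀ y ∈ cycleSpace G, (∀ e, e ∉ T → y e = 0) → y = 0 := by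
  intro y hy hyT
  by_contra hy0
  obtain ⟨z, hz, hzs⟩ := cyc_exists G hy hy0
  refine hT.1 z hz (hzs.trans ?_)
  intro e he
  rw [mem_support] at he
  by_contra heT
  exact he (hyT e heT)

lemma cocyc_inj {T : Finset G.E} (hT : IsSpanningTree G T) :
    ∀ y ∈ cocycleSpace G, (∀ e, e ∈ T → y e = 0) → y = 0 := by
  intro y hy hyT
  by_contra hy0
  obtain ⟨z, hz, hzs⟩ := cocyc_exists G hy hy0
  refine hT.2 z hz (hzs.trans ?_)
  intro e he
  rw [mem_support] at he
  intro heT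
  exact he (hyT e heT)

lemma fund_exists {T : Finset G.E} (hT : IsSpanningTree G T) :
    ∀ e ∉ T, ∃ y, FundCycle G T e y ∧ ∀ f, f ∉ T → f ≠ e → y f = 0 := by
  classical
  -- restriction maps
  set φc : cycleSpace G →ₗ[ℝ] ({e : G.E // e ∉ T} → ℝ) :=
    (LinearMap.funLeft ℝ ℝ (Subtype.val)).comp (cycleSpace G).subtype with hφc
  set φs : cocycleSpace G →ₗ[ℝ] ({e : G.E // e ∈ T} → ℝ) :=
    (LinearMap.funLeft ℝ ℝ (Subtype.val)).comp (cocycleSpace G).subtype with hφs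
  have hφc_apply : ∀ (y : cycleSpace G) (i : {e : G.E // e ∉ T}), φc y i = y.val i.val :=
    fun y i => rfl
  have hφs_apply : ∀ (y : cocycleSpace G) (i : {e : G.E // e ∈ T}), φs y i = y.val i.val :=
    fun y i => rfl
  have hinjc : Function.Injective φc := by
    rw [← LinearMap.ker_eq_bot, LinearMap.ker_eq_bot']
    intro y hy
    have : y.val = 0 := by
      apply cyc_inj G hT y.val y.2
      intro e he
      have := congrFun hy ⟨e, he⟩
      exact this
    exact Subtype.ext this
  have hinjs : Function.Injective φs := by
    rw [← LinearMap.ker_eq_bot, LinearMap.ker_eq_bot']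
    intro y hy
    have : y.val = 0 := by
      apply cocyc_inj G hT y.val y.2
      intro e he
      exact congrFun hy ⟨e, he⟩
    exact Subtype.ext this
  -- dimension count
  have hrn : Module.finrank ℝ (LinearMap.range (DMap G)) +
      Module.finrank ℝ (cycleSpace G) = Fintype.card G.E := by
    rw [cycleSpace]
    have h := LinearMap.finrank_range_add_finrank_ker (DMap G)
    rwa [Module.finrank_fintype_fun_eq_card] at h
  have hco : Module.finrank ℝ (cocycleSpace G) =
      Module.finrank ℝ (LinearMap.range (DMap G)) := by
    have h1 : ((incMat G).transpose).rank = (incMat G).rank := Matrix.rank_transpose _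
    rw [cocycleSpace, DMap]
    exact h1
  have hlec : Module.finrank ℝ (cycleSpace G) ≤ Fintype.card {e : G.E // e ∉ T} := by
    have := LinearMap.finrank_le_finrank_of_injective hinjc
    rwa [Module.finrank_fintype_fun_eq_card] at this
  have hles : Module.finrank ℝ (cocycleSpace G) ≤ Fintype.card {e : G.E // e ∈ T} := by
    have := LinearMap.finrank_le_finrank_of_injective hinjs
    rwa [Module.finrank_fintype_fun_eq_card] at this
  have hcards : Fintype.card {e : G.E // e ∈ T} + Fintype.card {e : G.E // e ∉ T} =
      Fintype.card G.E := by
    have h1 : Fintype.card {e : G.E // e ∈ T} = T.card := Fintype.card_coe T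
    have h2 : Fintype.card {e : G.E // e ∉ T} = Fintype.card G.E - T.card := by
      rw [Fintype.card_subtype_compl, h1]
    have h3 : T.card ≤ Fintype.card G.E := by
      rw [← Finset.card_univ]; exact Finset.card_le_univ T
    omega
  have hdimc : Module.finrank ℝ (cycleSpace G) = Fintype.card {e : G.E // e ∉ T} := by
    omega
  have hsurjc : Function.Surjective φc := by
    have hfr : Module.finrank ℝ (cycleSpace G) =
        Module.finrank ℝ ({e : G.E // e ∉ T} → ℝ) := by
      rw [Module.finrank_fintype_fun_eq_card, hdimc]
    exact (LinearMap.injective_iff_surjective_of_finrank_eq_finrank hfr).mp hinjc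
  -- construct fundamental cycles
  intro e he
  obtain ⟨Y, hY⟩ := hsurjc (Pi.single ⟨e, he⟩ 1)
  set y := Y.val with hy
  have hym : y ∈ cycleSpace G := Y.2
  have hye : y e = 1 := by
    have := congrFun hY ⟨e, he⟩
    rw [hφc_apply] at this
    rw [hy, this, Pi.single_eq_same]
  have hyf : ∀ f, f ∉ T → f ≠ e → y f = 0 := by
    intro f hf hfe
    have := congrFun hY ⟨f, hf⟩
    rw [hφc_apply] at this
    rw [hy, this, Pi.single_eq_of_ne]
    exact fun hc => hfe (congrArg Subtype.val hc)
  have hy0 : y ≠ 0 := by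
    intro h
    rw [h] at hye
    simp at hye
  -- scalar representation of anything supported in supp y
  have hrep : ∀ y' ∈ cycleSpace G, support y' ⊆ support y → y' = y' e • y := by
    intro y' hy' hys
    have hd : y' - y' e • y = 0 := by
      apply cyc_inj G hT _ (Submodule.sub_mem _ hy' (Submodule.smul_mem _ _ hym))
      intro f hf
      by_cases hfe : f = e
      · subst hfe
        simp [hye]
      · have h1 : y f = 0 := hyf f hf hfe
        have h2 : y' f = 0 := by
          by_contra hc
          exact (mem_support.mp (hys (mem_support.mpr hc))) h1
        simp [h1, h2]
    have := sub_eq_zero.mp hd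
    exact this
  have hmin : ∀ y' ∈ cycleSpace G, y' ≠ 0 → support y' ⊆ support y →
      support y' = support y := by
    intro y' hy' hy'0 hys
    have hrep' := hrep y' hy' hys
    have hy'e : y' e ≠ 0 := by
      intro hc
      rw [hc, zero_smul] at hrep'
      exact hy'0 hrep'
    rw [hrep']
    exact Function.support_const_smul_of_ne_zero _ _ hy'e
  -- ZPM
  obtain ⟨z, hzm, hz0, hzz, hzs⟩ := zpm_in_cyc G hym hy0
  have hze : z e ≠ 0 := by
    have : support z = support y := hmin z hzm hz0 hzs
    have he' : e ∈ support y := mem_support.mpr (by rw [hye]; norm_num)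
    exact mem_support.mp (this ▸ he')
  obtain ⟨c, hc1, hcrep⟩ : ∃ c : ℝ, (c = 1 ∨ c = -1) ∧ z = c • y := by
    refine ⟨z e, ?_, hrep z hzm hzs⟩
    rcases hzz e with h | h | h
    · exact absurd h hze
    · exact Or.inl h
    · exact Or.inr h
  have hyzpm : IsZPM G y := by
    intro f
    have hf := congrFun hcrep f
    simp only [Pi.smul_apply, smul_eq_mul] at hf
    rcases hc1 with h | h <;> rw [h] at hf <;> rcases hzz f with h' | h' | h' <;>
      rw [h'] at hf <;> norm_num at hf <;> simp [hf]
  refine ⟨y, ⟨⟨hym, hy0, hyzpm, hmin⟩, hye, ?_⟩, hyf⟩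
  intro f hf
  rw [mem_support] at hf
  by_cases hfT : f ∈ T
  · exact Set.mem_insert_of_mem _ hfT
  · by_cases hfe : f = e
    · rw [hfe]; exact Set.mem_insert _ _
    · exact absurd (hyf f hfT hfe) hf

end GBAux


open GB in
theorem stmt_8 (G : GB.Graph) (hconn : GB.Connected G)
    (σc : GB.CycSig G) (σs : GB.CocycSig G)
    (hac : GB.AcyclicSig G σc) (hacs : GB.AcyclicCosig G σs)
    (T : Finset G.E) (hT : GB.IsSpanningTree G T)
    (O : G.E → ℝ) (hO : GB.GOrient G σc σs T O)
    (C : G.E → ℝ) (hC : C ∈ GB.cycleSpace G) (hCint : GB.IsIntVec G C)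
    (harc : ∀ e ∉ T, C e ≠ 0 → 0 < C e * GB.dir G O e) :
    (∃ (n : ℕ) (c : Fin n → (G.E → ℝ)) (a : Fin n → ℕ),
      (∀ i, GB.IsDirCycle G (c i) ∧ c i = σc.s (Function.support (c i))) ∧
      C = ∑ i, (a i : ℝ) • c i) ∧
    (GB.IsDirCycle G C → C = σc.s (Function.support C)) := by
  classical
  have hfund := GBAux.fund_exists G hT
  set Y : G.E → (G.E → ℝ) :=
    fun e => if h : e ∉ T then Classical.choose (hfund e h) else 0 with hYdef
  have hY : ∀ e, e ∉ T → (GB.FundCycle G T e (Y e) ∧ ∀ f, f ∉ T → f ≠ e → Y e f = 0) := by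
    intro e he
    have h := Classical.choose_spec (hfund e he)
    have hYe' : Y e = Classical.choose (hfund e he) := by
      simp only [hYdef]
      rw [dif_pos he]
    rw [hYe']
    exact h
  have hYd : ∀ e, e ∉ T → GB.IsDirCycle G (Y e) := fun e he => (hY e he).1.1
  have hYe : ∀ e, e ∉ T → Y e e = 1 := fun e he => (hY e he).1.2.1
  have hYoff : ∀ e, e ∉ T → ∀ f, f ∉ T → f ≠ e → Y e f = 0 := fun e he => (hY e he).2
  -- the σ-value of the fundamental cycle
  have hsig : ∀ e, ∀ he : e ∉ T, σc.s (Function.support (Y e)) = GB.dir G O e • Y e := by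
    intro e he
    have hcyc : GB.IsCycle G (Function.support (Y e)) := ⟨Y e, hYd e he, rfl⟩
    obtain ⟨hsd, hss⟩ := σc.mem _ hcyc
    obtain ⟨c0, hc0⟩ := GBAux.dirCycle_scalar G (hYd e he) hsd.1 (by rw [hss])
    have he1 : σc.s (Function.support (Y e)) e = c0 := by
      rw [hc0]
      simp [hYe e he]
    have he2 : GB.dir G O e = c0 := by
      rw [hO.2.1 e he (Y e) (hY e he).1, he1]
    rw [hc0, he2]
  -- decomposition over fundamental cycles
  have hdec : C = ∑ e ∈ Finset.univ.filter (fun e => e ∉ T), C e • Y e := by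
    have hd : C - ∑ e ∈ Finset.univ.filter (fun e => e ∉ T), C e • Y e = 0 := by
      apply GBAux.cyc_inj G hT
      · apply Submodule.sub_mem _ hC
        apply Submodule.sum_mem
        intro e he
        simp only [Finset.mem_filter] at he
        exact Submodule.smul_mem _ _ (hYd e he.2).1
      · intro f hf
        have hsum : (∑ e ∈ Finset.univ.filter (fun e => e ∉ T), C e • Y e) f = C f := by
          rw [Finset.sum_apply]
          rw [Finset.sum_eq_single f]
          · simp [hYe f hf]
          · intro e he hef
            simp only [Finset.mem_filter] at he
            simp [hYoff e he.2 f hf (Ne.symm hef)]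
          · intro hcon
            simp [hf] at hcon
        simp [hsum]
    have := sub_eq_zero.mp hd
    exact this
  -- the key coefficient identity
  have hdir : ∀ e : G.E, GB.dir G O e = 1 ∨ GB.dir G O e = -1 := by
    intro e
    rcases hO.1 e with h | h <;> rw [GB.dir, h] <;> norm_num
  have key : ∀ f, f ∉ T → |C f| • σc.s (Function.support (Y f)) = C f • Y f := by
    intro f hf
    rw [hsig f hf, smul_smul]
    by_cases hCf : C f = 0
    · rw [hCf]; simp
    · congr 1
      rcases hdir f with h | h <;> rw [h]
      · rw [mul_one]
        exact abs_of_pos (by have := harc f hf hCf; rw [h, mul_one] at this; exact this)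
      · have hneg : C f < 0 := by
          have := harc f hf hCf
          rw [h] at this
          nlinarith
        rw [abs_of_neg hneg]
        ring
  have habs : ∀ f : G.E, ∃ m : ℕ, (m : ℝ) = |C f| := by
    intro f
    obtain ⟨n, hn⟩ := hCint f
    exact ⟨n.natAbs, by rw [hn, Nat.cast_natAbs, Int.cast_abs]⟩
  choose ab hab using habs
  constructor
  · -- existence of nonnegative integer combination
    have eqv : {e : G.E // e ∉ T} ≃ Fin (Fintype.card {e : G.E // e ∉ T}) :=
      Fintype.equivFin {e : G.E // e ∉ T}
    refine ⟨Fintype.card {e : G.E // e ∉ T}, fun i => σc.s (Function.support (Y (eqv.symm i).val)),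
      fun i => ab (eqv.symm i).val, ?_, ?_⟩
    · intro i
      set f := (eqv.symm i).val with hfdef
      have hf : f ∉ T := (eqv.symm i).2
      have hcyc : GB.IsCycle G (Function.support (Y f)) := ⟨Y f, hYd f hf, rfl⟩
      obtain ⟨hsd, hss⟩ := σc.mem _ hcyc
      exact ⟨hsd, by rw [hss]⟩
    · rw [hdec]
      have h1 : ∑ i : Fin (Fintype.card {e : G.E // e ∉ T}), ((ab (eqv.symm i).val : ℝ)) • σc.s (Function.support (Y (eqv.symm i).val))
          = ∑ e : {e : G.E // e ∉ T}, ((ab e.val : ℝ)) • σc.s (Function.support (Y e.val)) :=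
        Equiv.sum_comp eqv.symm
          (fun e => ((ab e.val : ℝ)) • σc.s (Function.support (Y e.val)))
      rw [h1]
      rw [← Finset.sum_subtype (Finset.univ.filter (fun e => e ∉ T))
        (by intro x; simp) (fun e => ((ab e : ℝ)) • σc.s (Function.support (Y e)))]
      apply Finset.sum_congr rfl
      intro f hf
      simp only [Finset.mem_filter] at hf
      rw [hab f, key f hf.2]
  · -- σ-compatibility of a directed cycle
    intro hC2
    set S0 := Function.support C with hS0
    have hS0cyc : GB.IsCycle G S0 := ⟨C, hC2, rfl⟩
    obtain ⟨hsd, hss⟩ := σc.mem _ hS0cyc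
    obtain ⟨c0, hc0⟩ := GBAux.dirCycle_scalar G hC2 hsd.1 (by rw [hss])
    obtain ⟨e1, he1⟩ : ∃ e1, C e1 ≠ 0 := by
      by_contra h; push_neg at h; exact hC2.2.1 (funext h)
    have hs1 : σc.s S0 e1 ≠ 0 := by
      have : e1 ∈ Function.support (σc.s S0) := by rw [hss]; exact Function.mem_support.mpr he1
      exact Function.mem_support.mp this
    have heq : σc.s S0 e1 = c0 * C e1 := by rw [hc0]; rfl
    have hc01 : c0 = 1 ∨ c0 = -1 := by
      rcases hC2.2.2.1 e1 with h | h | h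
      · exact absurd h he1
      all_goals rcases hsd.2.2.1 e1 with h' | h' | h'
      · exact absurd h' hs1
      · left; rw [h, mul_one] at heq; rw [← heq, h']
      · right; rw [h, mul_one] at heq; rw [← heq, h']
      · exact absurd h' hs1
      · right; rw [h] at heq; rw [h'] at heq; linarith
      · left; rw [h] at heq; rw [h'] at heq; linarith
    rcases hc01 with h | h
    · rw [hc0, h, one_smul]
    · -- contradiction with acyclicity
      exfalso
      rw [h] at hc0
      set A : Set G.E → ℝ := fun S => (if S = S0 then 1 else 0) +
        ∑ f ∈ (Finset.univ.filter (fun f => f ∉ T)).filter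
          (fun f => Function.support (Y f) = S), |C f| with hA
      have hA0 : ∀ S, 0 ≤ A S := by
        intro S
        apply add_nonneg
        · split <;> norm_num
        · exact Finset.sum_nonneg (fun f _ => abs_nonneg _)
      have hsum : ∑ S ∈ Finset.univ.filter (fun S => GB.IsCycle G S), A S • σc.s S = 0 := by
        rw [Finset.sum_filter]
        have hterm : ∀ S ∈ (Finset.univ : Finset (Set G.E)),
            (if GB.IsCycle G S then A S • σc.s S else 0) = A S • σc.s S := by
          intro S _
          split
          · rfl
          · rename_i hni
            have hA0' : A S = 0 := by
              rw [hA]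
              simp only
              rw [if_neg (fun hc : S = S0 => hni (hc ▸ hS0cyc)), zero_add]
              apply Finset.sum_eq_zero
              intro f hfm
              simp only [Finset.mem_filter, Finset.mem_univ, true_and] at hfm
              exfalso
              apply hni
              rw [← hfm.2]
              exact ⟨Y f, hYd f hfm.1, rfl⟩
            rw [hA0', zero_smul]
        rw [Finset.sum_congr rfl hterm]
        have hsplit : ∀ S : Set G.E, A S • σc.s S =
            (if S = S0 then (1:ℝ) else 0) • σc.s S +
            (∑ f ∈ (Finset.univ.filter (fun f => f ∉ T)).filter
              (fun f => Function.support (Y f) = S), |C f|) • σc.s S := by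
          intro S
          rw [hA]
          simp only
          rw [add_smul]
        rw [Finset.sum_congr rfl (fun S _ => hsplit S), Finset.sum_add_distrib]
        have hfirst : ∑ S : Set G.E, (if S = S0 then (1:ℝ) else 0) • σc.s S = σc.s S0 := by
          have hSw0 : ∀ S : Set G.E, (if S = S0 then (1:ℝ) else 0) • σc.s S =
              (if S = S0 then σc.s S0 else 0) := by
            intro S
            split
            · rename_i hS; rw [one_smul, hS]
            · rw [zero_smul]
          rw [Finset.sum_congr rfl (fun S _ => hSw0 S),
            Finset.sum_ite_eq' Finset.univ S0 (fun _ => σc.s S0)]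
          simp
        have hsecond : ∑ S : Set G.E,
            (∑ f ∈ (Finset.univ.filter (fun f => f ∉ T)).filter
              (fun f => Function.support (Y f) = S), |C f|) • σc.s S
            = ∑ f ∈ Finset.univ.filter (fun f => f ∉ T), |C f| • σc.s (Function.support (Y f)) := by
          have hSw : ∀ S : Set G.E, (∑ f ∈ (Finset.univ.filter (fun f => f ∉ T)).filter
              (fun f => Function.support (Y f) = S), |C f|) • σc.s S
              = ∑ f ∈ (Finset.univ.filter (fun f => f ∉ T)).filter
                (fun f => Function.support (Y f) = S), |C f| • σc.s (Function.support (Y f)) := by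
            intro S
            rw [Finset.sum_smul]
            apply Finset.sum_congr rfl
            intro f hfm
            simp only [Finset.mem_filter] at hfm
            rw [hfm.2]
          rw [Finset.sum_congr rfl (fun S _ => hSw S)]
          exact Finset.sum_fiberwise_of_maps_to (fun f _ => Finset.mem_univ _) _
        rw [hfirst, hsecond]
        have hlast : ∑ f ∈ Finset.univ.filter (fun f => f ∉ T),
            |C f| • σc.s (Function.support (Y f)) = C := by
          rw [Finset.sum_congr rfl (fun f hf => key f (by simpa using hf))]
          exact hdec.symm
        rw [hlast, hc0]
        simp
      have := hac A hA0 hsum S0 hS0cyc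
      have hge : (1:ℝ) ≤ A S0 := by
        have h0 : (0:ℝ) ≤ ∑ f ∈ (Finset.univ.filter (fun f => f ∉ T)).filter
            (fun f => Function.support (Y f) = S0), |C f| :=
          Finset.sum_nonneg (fun f _ => abs_nonneg (C f))
        have hAeq : A S0 = 1 + ∑ f ∈ (Finset.univ.filter (fun f => f ∉ T)).filter
            (fun f => Function.support (Y f) = S0), |C f| := by
          rw [hA]
          simp
        linarith
      linarith
end
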